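/- arXiv:2207.06715 — 5 statements merged into one kernel-verified Lean document; each statement's English description precedes it below -/
import Mathlib

section
/- Let {X_n, n ≥ 1} be a sequence of random variables and define G(x) = sup_{n≥1} (1/n) Σ_{i=1}^n P(|X_i| > x) for x ∈ ℝ. Let {b_n, n ≥ 1} be a nondecreasing sequence of positive real numbers such that Σ_{i=1}^n b_i/i² = O(b_n/n). If lim_{k→∞} k·G(b_k) = 0, then (1/b_n) max_{j≤n} |Σ_{i=1}^j X_i| → 0 in probability as n → ∞. -/
open MeasureTheory Filter Set

private lemma trunc_le_sum {c : ℕ → ℝ} (hc0 : c 0 = 0) (hc : Monotone c) {y : ℝ} (hy : 0 ≤ y) :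
    ∀ n : ℕ, min y (c n) ≤
      ∑ j ∈ Finset.range n, (c (j + 1) - c j) * (if c j < y then 1 else 0) := by
  intro n
  induction n with
  | zero => simp [hc0, hy]
  | succ n ih =>
    rw [Finset.sum_range_succ]
    by_cases h : c n < y
    · rw [if_pos h, mul_one]
      have h4 : min y (c n) = c n := min_eq_right h.le
      have h5 : min y (c (n + 1)) ≤ c (n + 1) := min_le_right _ _
      linarith
    · push_neg at h
      rw [if_neg (not_lt.2 h), mul_zero, add_zero]
      have h1 : min y (c (n + 1)) = y := min_eq_left (h.trans (hc (Nat.le_succ n)))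
      have h2 : min y (c n) = y := min_eq_left h
      linarith [ih, h1, h2]

private lemma abel_bound {c : ℕ → ℝ} (hc0 : c 0 = 0) (hc : Monotone c) :
    ∀ n : ℕ, 1 ≤ n →
      ∑ j ∈ Finset.range n, (c (j + 1) - c j) * (if j = 0 then 0 else 1 / (j : ℝ))
        ≤ 2 * c n / n + 3 * ∑ k ∈ Finset.Icc 1 n, c k / (k : ℝ) ^ 2 := by
  intro n hn
  induction n with
  | zero => omega
  | succ n ih =>
    rcases Nat.lt_or_ge n 2 with h2 | h2
    · interval_cases n
      · have h1 : (0:ℝ) ≤ c 1 := hc0 ▸ hc (by norm_num)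
        simp [hc0]
        nlinarith
      · have h1 : (0:ℝ) ≤ c 1 := hc0 ▸ hc (by norm_num)
        have h12 : c 1 ≤ c 2 := hc (by norm_num)
        rw [Finset.sum_range_succ, Finset.sum_range_succ, Finset.sum_range_zero]
        rw [show Finset.Icc 1 2 = {1, 2} by rfl]
        norm_num
        nlinarith
    · have ih' := ih (by omega)
      rw [Finset.sum_range_succ]
      have hne : n ≠ 0 := by omega
      rw [if_neg hne]
      rw [Finset.sum_Icc_succ_top (by omega)]
      have hN : (2:ℝ) ≤ (n:ℝ) := by exact_mod_cast h2
      have hcc : c n ≤ c (n + 1) := hc (Nat.le_succ n)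
      have hc1 : (0:ℝ) ≤ c n := hc0 ▸ hc (Nat.zero_le n)
      have key : 2 * c n / n + (c (n + 1) - c n) * (1 / n)
          ≤ 2 * c (n + 1) / (↑(n + 1)) + 3 * (c (n + 1) / (↑(n + 1)) ^ 2) := by
        push_cast
        rw [show 2 * c n / (n:ℝ) + (c (n + 1) - c n) * (1 / (n:ℝ)) = (c n + c (n+1)) / n by
          field_simp; ring]
        have h0 : (n:ℝ) ≠ 0 := by positivity
        have hn0 : (0:ℝ) < n := by linarith
        rw [show 2 * c (n+1) / ((n:ℝ) + 1) + 3 * (c (n+1) / ((n:ℝ) + 1) ^ 2)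
            = (2 * c (n+1) * ((n:ℝ)+1) + 3 * c (n+1)) / (((n:ℝ)+1)^2) by field_simp]
        rw [div_le_div_iff₀ hn0 (by positivity)]
        nlinarith [mul_nonneg (sub_nonneg.2 hcc) (sub_nonneg.2 hN),
          mul_nonneg hc1 (sub_nonneg.2 hN),
          mul_nonneg (mul_nonneg (sub_nonneg.2 hcc) (sub_nonneg.2 hN)) (le_trans (by norm_num) hN),
          sq_nonneg ((n:ℝ) - 2)]
      linarith

/-- Let `{X_n}` be random variables with
`G(x) = sup_n (1/n) Σ_{i=1}^n P(|X_i| > x)` and let `{b_n}` be a nondecreasing sequence of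
positive reals with `Σ_{i=1}^n b_i/i² = O(b_n/n)`. If `k·G(b_k) → 0`, then
`(1/b_n) max_{j≤n} |Σ_{i=1}^j X_i| → 0` in probability. -/
theorem statement1
    {Ω : Type*} [MeasurableSpace Ω] (μ : Measure Ω) [IsProbabilityMeasure μ]
    (X : ℕ → Ω → ℝ) (hXmeas : ∀ i, Measurable (X i))
    (G : ℝ → ℝ)
    (hG : ∀ x : ℝ, G x = ⨆ n : ℕ, (1 / (n : ℝ)) * ∑ i ∈ Finset.Icc 1 n,
      (μ {ω | |X i ω| > x}).toReal)
    (b : ℕ → ℝ) (hbpos : ∀ n, 1 ≤ n → 0 < b n)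
    (hbmono : ∀ m n, 1 ≤ m → m ≤ n → b m ≤ b n)
    (hbO : ∃ C : ℝ, ∀ n, 1 ≤ n →
      ∑ i ∈ Finset.Icc 1 n, b i / (i : ℝ) ^ 2 ≤ C * (b n / (n : ℝ)))
    (hGb : Tendsto (fun k : ℕ => (k : ℝ) * G (b k)) atTop (nhds 0)) :
    ∀ ε : ℝ, 0 < ε → Tendsto (fun n : ℕ =>
      (μ {ω | (1 / b n) * (Finset.range (n + 1)).sup' Finset.nonempty_range_add_one
          (fun j => |∑ i ∈ Finset.Icc 1 j, X i ω|) > ε}).toReal) atTop (nhds 0) := by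
  intro ε hε
  obtain ⟨C, hC⟩ := hbO
  have hb1 : 0 < b 1 := hbpos 1 le_rfl
  have hC1 : 1 ≤ C := by
    have h := hC 1 le_rfl
    simp at h
    nlinarith
  have hCpos : 0 < C := lt_of_lt_of_le one_pos hC1
  -- the modified sequence with c 0 = 0
  set c : ℕ → ℝ := fun k => if k = 0 then 0 else b k with hcdef
  have hc0 : c 0 = 0 := by simp [hcdef]
  have hck : ∀ k, 1 ≤ k → c k = b k := by
    intro k hk
    simp [hcdef, Nat.one_le_iff_ne_zero.1 hk]
  have hcmono : Monotone c := by
    apply monotone_nat_of_le_succ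
    intro k
    rcases Nat.eq_zero_or_pos k with rfl | hk
    · simpa [hcdef] using (hbpos 1 le_rfl).le
    · rw [hck k hk, hck (k+1) (by omega)]
      exact hbmono k (k+1) hk (Nat.le_succ k)
  have hcnonneg : ∀ k, 0 ≤ c k := fun k => hc0 ▸ hcmono (Nat.zero_le k)
  -- basic facts about G
  have hPle1 : ∀ (i : ℕ) (x : ℝ), (μ {ω | |X i ω| > x}).toReal ≤ 1 := by
    intro i x
    have h := prob_le_one (μ := μ) (s := {ω | |X i ω| > x})
    simpa using ENNReal.toReal_mono (by simp) h
  have hterm : ∀ (x : ℝ) (m : ℕ),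
      (1 / (m : ℝ)) * ∑ i ∈ Finset.Icc 1 m, (μ {ω | |X i ω| > x}).toReal ≤ 1 := by
    intro x m
    rcases Nat.eq_zero_or_pos m with rfl | hm
    · simp
    · have hs : ∑ i ∈ Finset.Icc 1 m, (μ {ω | |X i ω| > x}).toReal ≤ (m : ℝ) := by
        calc ∑ i ∈ Finset.Icc 1 m, (μ {ω | |X i ω| > x}).toReal
            ≤ ∑ i ∈ Finset.Icc 1 m, (1:ℝ) := Finset.sum_le_sum (fun i _ => hPle1 i x)
          _ = (m : ℝ) := by simp
      have hm0 : (0:ℝ) < m := by positivity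
      rw [one_div, inv_mul_le_iff₀ hm0, mul_one]
      exact hs
  have hbdd : ∀ x : ℝ, BddAbove (Set.range fun m : ℕ =>
      (1 / (m : ℝ)) * ∑ i ∈ Finset.Icc 1 m, (μ {ω | |X i ω| > x}).toReal) := by
    intro x
    exact ⟨1, by rintro _ ⟨m, rfl⟩; exact hterm x m⟩
  have hG1 : ∀ x, G x ≤ 1 := by
    intro x
    rw [hG x]
    exact ciSup_le (hterm x)
  have hG0 : ∀ x, 0 ≤ G x := by
    intro x
    rw [hG x]
    have h0 : (1 / ((0:ℕ) : ℝ)) * ∑ i ∈ Finset.Icc 1 0, (μ {ω | |X i ω| > x}).toReal = 0 := by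
      simp
    calc (0:ℝ) = _ := h0.symm
      _ ≤ _ := le_ciSup (hbdd x) 0
  have hGsum : ∀ (x : ℝ) (n : ℕ),
      ∑ i ∈ Finset.Icc 1 n, (μ {ω | |X i ω| > x}).toReal ≤ (n : ℝ) * G x := by
    intro x n
    rcases Nat.eq_zero_or_pos n with rfl | hn
    · simp
    · have h1 : (1 / (n : ℝ)) * ∑ i ∈ Finset.Icc 1 n, (μ {ω | |X i ω| > x}).toReal ≤ G x :=
        hG x ▸ le_ciSup (hbdd x) n
      have hn0 : (0:ℝ) < n := by positivity
      calc ∑ i ∈ Finset.Icc 1 n, (μ {ω | |X i ω| > x}).toReal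
          = (n : ℝ) * ((1 / (n : ℝ)) * ∑ i ∈ Finset.Icc 1 n, (μ {ω | |X i ω| > x}).toReal) := by
            field_simp
        _ ≤ (n : ℝ) * G x := mul_le_mul_of_nonneg_left h1 hn0.le
  -- T n
  set T : ℕ → ℝ := fun n => ∑ j ∈ Finset.range n, (c (j + 1) - c j) * G (c j) with hTdef
  have hT0 : ∀ n, 0 ≤ T n := by
    intro n
    apply Finset.sum_nonneg
    intro j _
    exact mul_nonneg (sub_nonneg.2 (hcmono (Nat.le_succ j))) (hG0 _)
  -- key bound
  have key : ∀ n : ℕ, 1 ≤ n →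
      (μ {ω | (1 / b n) * (Finset.range (n + 1)).sup' Finset.nonempty_range_add_one
          (fun j => |∑ i ∈ Finset.Icc 1 j, X i ω|) > ε}).toReal
        ≤ (n : ℝ) * G (b n) + (n : ℝ) * T n / (ε * b n) := by
    intro n hn
    have hbn : 0 < b n := hbpos n hn
    have hn0 : (0:ℝ) < n := by exact_mod_cast hn
    set A : Set Ω := ⋃ i ∈ Finset.Icc 1 n, {ω | |X i ω| > b n} with hA
    set f0 : Ω → ℝ := fun ω => ∑ i ∈ Finset.Icc 1 n, min |X i ω| (b n) with hf0
    set B : Set Ω := {ω | ε * b n < f0 ω} with hB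
    have hsub : {ω | (1 / b n) * (Finset.range (n + 1)).sup' Finset.nonempty_range_add_one
          (fun j => |∑ i ∈ Finset.Icc 1 j, X i ω|) > ε} ⊆ A ∪ B := by
      intro ω hω
      simp only [Set.mem_setOf_eq] at hω
      by_contra hcon
      rw [Set.mem_union] at hcon
      push_neg at hcon
      obtain ⟨hA', hB'⟩ := hcon
      have hXle : ∀ i ∈ Finset.Icc 1 n, |X i ω| ≤ b n := by
        intro i hi
        by_contra hgt
        exact hA' (Set.mem_biUnion hi (by simpa using lt_of_not_ge hgt))
      have hf0le : f0 ω ≤ ε * b n := by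
        by_contra h
        exact hB' (by simpa [hB] using lt_of_not_ge h)
      have hsup : (Finset.range (n + 1)).sup' Finset.nonempty_range_add_one
          (fun j => |∑ i ∈ Finset.Icc 1 j, X i ω|) ≤ ε * b n := by
        apply Finset.sup'_le
        intro j hj
        have hjn : j ≤ n := Nat.lt_succ_iff.1 (Finset.mem_range.1 hj)
        calc |∑ i ∈ Finset.Icc 1 j, X i ω| ≤ ∑ i ∈ Finset.Icc 1 j, |X i ω| :=
              Finset.abs_sum_le_sum_abs _ _
          _ ≤ ∑ i ∈ Finset.Icc 1 n, |X i ω| := by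
              apply Finset.sum_le_sum_of_subset_of_nonneg
              · exact Finset.Icc_subset_Icc_right hjn
              · intro i _ _
                exact abs_nonneg _
          _ = f0 ω := Finset.sum_congr rfl (fun i hi => (min_eq_left (hXle i hi)).symm)
          _ ≤ ε * b n := hf0le
      have hle : (1 / b n) * (Finset.range (n + 1)).sup' Finset.nonempty_range_add_one
          (fun j => |∑ i ∈ Finset.Icc 1 j, X i ω|) ≤ ε := by
        rw [one_div, inv_mul_le_iff₀ hbn]
        rw [mul_comm]
        exact hsup
      exact absurd hω (not_lt.2 hle)
    have hsetmeas : ∀ (i : ℕ) (x : ℝ), MeasurableSet {ω | |X i ω| > x} :=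
      fun i x => measurableSet_lt measurable_const (hXmeas i).abs
    have hmin_meas : ∀ i, Measurable (fun ω => min |X i ω| (b n)) :=
      fun i => (hXmeas i).abs.min measurable_const
    have hint : ∀ i, Integrable (fun ω => min |X i ω| (b n)) μ := by
      intro i
      apply Integrable.mono' (integrable_const (b n)) (hmin_meas i).aestronglyMeasurable
      filter_upwards with ω
      rw [Real.norm_eq_abs, abs_of_nonneg (le_min (abs_nonneg _) hbn.le)]
      exact min_le_right _ _
    have hf0int : Integrable f0 μ := integrable_finset_sum _ (fun i _ => hint i)
    have hmark := mul_meas_ge_le_integral_of_nonneg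
      (ae_of_all μ (fun ω => Finset.sum_nonneg (fun i _ => le_min (abs_nonneg _) hbn.le)))
      hf0int (ε * b n)
    have hind_int : ∀ i j : ℕ, Integrable
        (fun ω => (c (j + 1) - c j) * (if c j < |X i ω| then (1:ℝ) else 0)) μ := by
      intro i j
      apply Integrable.const_mul
      apply Integrable.mono' (integrable_const (1:ℝ))
      · exact (Measurable.ite (measurableSet_lt measurable_const (hXmeas i).abs)
          measurable_const measurable_const).aestronglyMeasurable
      · filter_upwards with ω
        rw [Real.norm_eq_abs]
        split_ifs <;> norm_num
    have hint_le : ∀ i, ∫ ω, min |X i ω| (b n) ∂μ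
        ≤ ∑ j ∈ Finset.range n, (c (j + 1) - c j) * (μ {ω | |X i ω| > c j}).toReal := by
      intro i
      have hmono : ∫ ω, min |X i ω| (b n) ∂μ ≤ ∫ ω, ∑ j ∈ Finset.range n,
          (c (j + 1) - c j) * (if c j < |X i ω| then (1:ℝ) else 0) ∂μ := by
        apply integral_mono (hint i) (integrable_finset_sum _ (fun j _ => hind_int i j))
        intro ω
        have h := trunc_le_sum hc0 hcmono (abs_nonneg (X i ω)) n
        rwa [hck n hn] at h
      rw [integral_finset_sum _ (fun j _ => hind_int i j)] at hmono
      refine hmono.trans (le_of_eq (Finset.sum_congr rfl (fun j _ => ?_)))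
      rw [integral_const_mul]
      congr 1
      have hfun : (fun ω => if c j < |X i ω| then (1:ℝ) else 0)
          = Set.indicator {ω | |X i ω| > c j} (1 : Ω → ℝ) := by
        funext ω
        simp only [Set.indicator_apply, Set.mem_setOf_eq, gt_iff_lt, Pi.one_apply]
      rw [hfun, integral_indicator_one (hsetmeas i (c j))]
      rfl
    have hintf0 : ∫ ω, f0 ω ∂μ ≤ (n:ℝ) * T n := by
      rw [hf0, integral_finset_sum _ (fun i _ => hint i)]
      calc ∑ i ∈ Finset.Icc 1 n, ∫ ω, min |X i ω| (b n) ∂μ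
          ≤ ∑ i ∈ Finset.Icc 1 n, ∑ j ∈ Finset.range n,
              (c (j + 1) - c j) * (μ {ω | |X i ω| > c j}).toReal :=
            Finset.sum_le_sum (fun i _ => hint_le i)
        _ = ∑ j ∈ Finset.range n, (c (j + 1) - c j) *
              ∑ i ∈ Finset.Icc 1 n, (μ {ω | |X i ω| > c j}).toReal := by
            rw [Finset.sum_comm]
            exact Finset.sum_congr rfl (fun j _ => (Finset.mul_sum _ _ _).symm)
        _ ≤ ∑ j ∈ Finset.range n, (c (j + 1) - c j) * ((n:ℝ) * G (c j)) := by
            apply Finset.sum_le_sum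
            intro j _
            exact mul_le_mul_of_nonneg_left (hGsum (c j) n)
              (sub_nonneg.2 (hcmono (Nat.le_succ j)))
        _ = (n:ℝ) * T n := by
            rw [hTdef, Finset.mul_sum]
            exact Finset.sum_congr rfl (fun j _ => by ring)
    have hBle : (μ B).toReal ≤ (n:ℝ) * T n / (ε * b n) := by
      have h1 : μ B ≤ μ {ω | ε * b n ≤ f0 ω} := measure_mono (by
        intro ω hω
        rw [hB, Set.mem_setOf_eq] at hω
        exact le_of_lt hω)
      have h2 : (μ B).toReal ≤ (μ {ω | ε * b n ≤ f0 ω}).toReal :=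
        ENNReal.toReal_mono (measure_ne_top _ _) h1
      have h3 : (μ {ω | ε * b n ≤ f0 ω}).toReal ≤ (n:ℝ) * T n / (ε * b n) := by
        rw [le_div_iff₀ (by positivity)]
        calc (μ {ω | ε * b n ≤ f0 ω}).toReal * (ε * b n)
            = (ε * b n) * (μ {ω | ε * b n ≤ f0 ω}).toReal := mul_comm _ _
          _ ≤ ∫ ω, f0 ω ∂μ := hmark
          _ ≤ (n:ℝ) * T n := hintf0
      exact h2.trans h3
    have hAle : (μ A).toReal ≤ (n:ℝ) * G (b n) := by
      have h1 : μ A ≤ ∑ i ∈ Finset.Icc 1 n, μ {ω | |X i ω| > b n} :=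
        measure_biUnion_finset_le _ _
      have h2 := ENNReal.toReal_mono
        (by exact (ENNReal.sum_lt_top.2 fun i _ => measure_lt_top μ _).ne) h1
      rw [ENNReal.toReal_sum (fun i _ => measure_ne_top μ _)] at h2
      exact h2.trans (hGsum (b n) n)
    have hE : μ {ω | (1 / b n) * (Finset.range (n + 1)).sup' Finset.nonempty_range_add_one
          (fun j => |∑ i ∈ Finset.Icc 1 j, X i ω|) > ε} ≤ μ A + μ B :=
      le_trans (measure_mono hsub) (measure_union_le A B)
    have hE2 := ENNReal.toReal_mono
      (by exact (ENNReal.add_lt_top.2 ⟨measure_lt_top μ _, measure_lt_top μ _⟩).ne) hE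
    rw [ENNReal.toReal_add (measure_ne_top μ _) (measure_ne_top μ _)] at hE2
    exact hE2.trans (add_le_add hAle hBle)
  -- b n / n tends to infinity
  have hbinf : Tendsto (fun n : ℕ => b n / n) atTop atTop := by
    have hlow : ∀ k : ℕ, 1 ≤ k → b 1 / C * (1 / (k : ℝ)) ≤ b k / (k : ℝ) ^ 2 := by
      intro k hk
      have hk0 : (0:ℝ) < k := by exact_mod_cast hk
      have h1 : b 1 ≤ ∑ i ∈ Finset.Icc 1 k, b i / (i : ℝ) ^ 2 := by
        have := Finset.single_le_sum (f := fun i : ℕ => b i / (i : ℝ) ^ 2)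
          (fun i hi => div_nonneg (hbpos i (Finset.mem_Icc.1 hi).1).le (by positivity))
          (Finset.mem_Icc.2 ⟨le_rfl, hk⟩)
        simpa using this
      have h2 : b 1 ≤ C * (b k / k) := h1.trans (hC k hk)
      have h3 : b 1 / C ≤ b k / k := by
        have h2' := mul_le_mul_of_nonneg_right h2 (le_of_lt hk0)
        rw [mul_assoc, div_mul_cancel₀ _ hk0.ne'] at h2'
        rw [div_le_div_iff₀ hCpos hk0]
        linarith
      calc b 1 / C * (1 / (k:ℝ)) ≤ (b k / k) * (1 / (k:ℝ)) :=
            mul_le_mul_of_nonneg_right h3 (by positivity)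
        _ = b k / (k:ℝ) ^ 2 := by rw [div_mul_div_comm, mul_one, sq]
    have hsum : ∀ n : ℕ, 1 ≤ n →
        b 1 / (C * C) * ∑ i ∈ Finset.range n, (1 : ℝ) / (i + 1) ≤ b n / n := by
      intro n hn
      have h1 : ∑ k ∈ Finset.Icc 1 n, b 1 / C * (1 / (k : ℝ))
          ≤ ∑ k ∈ Finset.Icc 1 n, b k / (k : ℝ) ^ 2 :=
        Finset.sum_le_sum (fun k hk => hlow k (Finset.mem_Icc.1 hk).1)
      have h2 : ∑ k ∈ Finset.Icc 1 n, b k / (k : ℝ) ^ 2 ≤ C * (b n / n) := hC n hn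
      have h3 : ∑ k ∈ Finset.Icc 1 n, b 1 / C * (1 / (k : ℝ))
          = b 1 / C * ∑ i ∈ Finset.range n, (1 : ℝ) / (i + 1) := by
        rw [← Finset.Ico_add_one_right_eq_Icc, Finset.sum_Ico_eq_sum_range, Finset.mul_sum]
        apply Finset.sum_congr (by norm_num)
        intro i _
        push_cast
        ring
      have h4 : b 1 / C * ∑ i ∈ Finset.range n, (1 : ℝ) / (i + 1) ≤ C * (b n / n) := by
        rw [← h3]; exact h1.trans h2
      calc b 1 / (C * C) * ∑ i ∈ Finset.range n, (1 : ℝ) / (i + 1)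
          = (1 / C) * (b 1 / C * ∑ i ∈ Finset.range n, (1 : ℝ) / (i + 1)) := by
            field_simp
            try ring
        _ ≤ (1 / C) * (C * (b n / n)) := mul_le_mul_of_nonneg_left h4 (by positivity)
        _ = b n / n := by field_simp
    have hhar : Tendsto (fun n : ℕ => b 1 / (C * C) * ∑ i ∈ Finset.range n, (1 : ℝ) / (i + 1))
        atTop atTop := by
      apply Tendsto.const_mul_atTop (by positivity)
      exact Real.tendsto_sum_range_one_div_nat_succ_atTop
    apply tendsto_atTop_mono' atTop _ hhar
    filter_upwards [eventually_ge_atTop 1] with n hn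
    exact hsum n hn
  have hnb : Tendsto (fun n : ℕ => (n : ℝ) / b n) atTop (nhds 0) := by
    have h := hbinf.inv_tendsto_atTop
    apply h.congr'
    filter_upwards [eventually_ge_atTop 1] with n hn
    simp only [Pi.inv_apply]
    rw [inv_div]
  -- second part of the bound tends to 0
  have hv : Tendsto (fun n : ℕ => (n : ℝ) * T n / (ε * b n)) atTop (nhds 0) := by
    rw [NormedAddCommGroup.tendsto_nhds_zero]
    intro δ hδ
    have hden : (0:ℝ) < 2 + 3 * C := by linarith
    set ε₁ : ℝ := δ * ε / (3 * (2 + 3 * C)) with hε₁def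
    have hε₁pos : 0 < ε₁ := by positivity
    obtain ⟨K0, hK0⟩ := Metric.tendsto_atTop.1 hGb ε₁ hε₁pos
    set K := max K0 1 with hKdef
    have hK1 : 1 ≤ K := le_max_right _ _
    have hKprop : ∀ j : ℕ, K ≤ j → G (b j) ≤ ε₁ / j := by
      intro j hj
      have hj1 : 1 ≤ j := le_trans hK1 hj
      have hjpos : (0:ℝ) < j := by exact_mod_cast hj1
      have h := hK0 j (le_trans (le_max_left _ _) hj)
      rw [Real.dist_eq, sub_zero, abs_of_nonneg (mul_nonneg hjpos.le (hG0 _))] at h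
      rw [le_div_iff₀ hjpos]
      linarith
    have hTb : ∀ n : ℕ, K ≤ n → T n ≤ c K + ε₁ * ((2 + 3 * C) * (b n / n)) := by
      intro n hn
      have hn1 : 1 ≤ n := le_trans hK1 hn
      have hsplit : T n = (∑ j ∈ Finset.range K, (c (j+1) - c j) * G (c j))
          + ∑ j ∈ Finset.Ico K n, (c (j+1) - c j) * G (c j) :=
        (Finset.sum_range_add_sum_Ico _ hn).symm
      have hpart1 : ∑ j ∈ Finset.range K, (c (j+1) - c j) * G (c j) ≤ c K := by
        calc ∑ j ∈ Finset.range K, (c (j+1) - c j) * G (c j)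
            ≤ ∑ j ∈ Finset.range K, (c (j+1) - c j) := by
              apply Finset.sum_le_sum
              intro j _
              nlinarith [hG1 (c j), hG0 (c j), sub_nonneg.2 (hcmono (Nat.le_succ j))]
          _ = c K - c 0 := Finset.sum_range_sub c K
          _ = c K := by rw [hc0, sub_zero]
      have hpart2 : ∑ j ∈ Finset.Ico K n, (c (j+1) - c j) * G (c j)
          ≤ ε₁ * ∑ j ∈ Finset.range n, (c (j+1) - c j) * (if j = 0 then 0 else 1/(j:ℝ)) := by
        calc ∑ j ∈ Finset.Ico K n, (c (j+1) - c j) * G (c j)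
            ≤ ∑ j ∈ Finset.Ico K n, ε₁ * ((c (j+1) - c j) * (if j = 0 then 0 else 1/(j:ℝ))) := by
              apply Finset.sum_le_sum
              intro j hj
              obtain ⟨hjK, hjn⟩ := Finset.mem_Ico.1 hj
              have hj1 : 1 ≤ j := le_trans hK1 hjK
              have hjne : j ≠ 0 := by omega
              rw [if_neg hjne]
              have hGj : G (c j) ≤ ε₁ / j := by rw [hck j hj1]; exact hKprop j hjK
              have hΔ : 0 ≤ c (j+1) - c j := sub_nonneg.2 (hcmono (Nat.le_succ j))
              calc (c (j+1) - c j) * G (c j) ≤ (c (j+1) - c j) * (ε₁ / j) :=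
                    mul_le_mul_of_nonneg_left hGj hΔ
                _ = ε₁ * ((c (j+1) - c j) * (1/(j:ℝ))) := by ring
          _ = ε₁ * ∑ j ∈ Finset.Ico K n, ((c (j+1) - c j) * (if j = 0 then 0 else 1/(j:ℝ))) :=
              (Finset.mul_sum _ _ _).symm
          _ ≤ ε₁ * ∑ j ∈ Finset.range n, (c (j+1) - c j) * (if j = 0 then 0 else 1/(j:ℝ)) := by
              apply mul_le_mul_of_nonneg_left _ hε₁pos.le
              apply Finset.sum_le_sum_of_subset_of_nonneg
              · intro j hj
                exact Finset.mem_range.2 (Finset.mem_Ico.1 hj).2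
              · intro j _ _
                apply mul_nonneg (sub_nonneg.2 (hcmono (Nat.le_succ j)))
                split_ifs
                · exact le_refl 0
                · positivity
      have habel := abel_bound hc0 hcmono n hn1
      have hsum_eq : ∑ k ∈ Finset.Icc 1 n, c k / (k:ℝ)^2
          = ∑ k ∈ Finset.Icc 1 n, b k / (k:ℝ)^2 :=
        Finset.sum_congr rfl (fun k hk => by rw [hck k (Finset.mem_Icc.1 hk).1])
      have hD : ∑ j ∈ Finset.range n, (c (j+1) - c j) * (if j = 0 then 0 else 1/(j:ℝ))
          ≤ (2 + 3*C) * (b n / n) := by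
        rw [hsum_eq, hck n hn1] at habel
        have h5 := hC n hn1
        calc ∑ j ∈ Finset.range n, (c (j+1) - c j) * (if j = 0 then 0 else 1/(j:ℝ))
            ≤ 2 * b n / n + 3 * ∑ k ∈ Finset.Icc 1 n, b k/(k:ℝ)^2 := habel
          _ ≤ 2 * (b n / n) + 3 * (C * (b n/n)) := by
              rw [mul_div_assoc]
              linarith
          _ = (2 + 3*C) * (b n/n) := by ring
      calc T n = _ := hsplit
        _ ≤ c K + ε₁ * ∑ j ∈ Finset.range n, (c (j+1) - c j) * (if j = 0 then 0 else 1/(j:ℝ)) :=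
            add_le_add hpart1 hpart2
        _ ≤ c K + ε₁ * ((2 + 3*C) * (b n / n)) :=
            add_le_add (le_refl _) (mul_le_mul_of_nonneg_left hD hε₁pos.le)
    have hcKpos : 0 < c K := by rw [hck K hK1]; exact hbpos K hK1
    have hpos' : (0:ℝ) < δ * ε / (3 * c K) := by positivity
    filter_upwards [eventually_ge_atTop K, eventually_ge_atTop 1,
      hnb.eventually_lt_const hpos'] with n hnK hn1 hnsmall
    have hbn : 0 < b n := hbpos n hn1
    have hn0 : (0:ℝ) < n := by exact_mod_cast hn1
    have hvpos : 0 ≤ (n:ℝ) * T n / (ε * b n) :=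
      div_nonneg (mul_nonneg hn0.le (hT0 n)) (by positivity)
    rw [Real.norm_eq_abs, abs_of_nonneg hvpos]
    have hineq : (n:ℝ) * T n / (ε * b n)
        ≤ (n:ℝ) * (c K + ε₁ * ((2 + 3*C) * (b n / n))) / (ε * b n) := by
      have h := mul_le_mul_of_nonneg_left (hTb n hnK) hn0.le
      exact div_le_div_of_nonneg_right h (by positivity)
    have hne1 : ε ≠ 0 := ne_of_gt hε
    have hne2 : b n ≠ 0 := ne_of_gt hbn
    have hne3 : (n:ℝ) ≠ 0 := ne_of_gt hn0
    have hne4 : (2 + 3*C) ≠ 0 := ne_of_gt hden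
    have heq : (n:ℝ) * (c K + ε₁ * ((2 + 3*C) * (b n / n))) / (ε * b n)
        = (c K / ε) * ((n:ℝ) / b n) + δ / 3 := by
      rw [hε₁def]
      field_simp
    have hterm1 : (c K / ε) * ((n:ℝ) / b n) < δ / 3 := by
      calc (c K / ε) * ((n:ℝ) / b n) < (c K / ε) * (δ * ε / (3 * c K)) :=
            mul_lt_mul_of_pos_left hnsmall (div_pos hcKpos hε)
        _ = δ / 3 := by field_simp
    calc (n:ℝ) * T n / (ε * b n) ≤ _ := hineq
      _ = _ := heq
      _ < δ / 3 + δ / 3 := by linarith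
      _ ≤ δ := by linarith
  -- conclude
  have hu : Tendsto (fun n : ℕ => (n : ℝ) * G (b n) + (n : ℝ) * T n / (ε * b n))
      atTop (nhds 0) := by
    simpa using hGb.add hv
  apply squeeze_zero' (g := fun n : ℕ => (n : ℝ) * G (b n) + (n : ℝ) * T n / (ε * b n))
  · filter_upwards with n
    exact ENNReal.toReal_nonneg
  · filter_upwards [eventually_ge_atTop 1] with n hn
    exact key n hn
  · exact hu
end

section
/- Let {k_n, n ≥ 1} be a sequence of positive integers, {X_{n,i}, 1 ≤ i ≤ k_n, n ≥ 1} an array of random variables, and {a_{n,i}, 1 ≤ i ≤ k_n, n ≥ 1} an array of nonnegative real numbers satisfying sup_{n≥1} Σ_{i=1}^{k_n} a_{n,i} = C_0 ∈ (0,∞). Define F(x) = 1 − (1/C_0) sup_{n≥1} Σ_{i=1}^{k_n} a_{n,i} P(|X_{n,i}| > x) for x ∈ ℝ. Then F is the distribution function of a random variable X if and only if lim_{x→∞} F(x) = 1; and in that case {X_{n,i}} is {a_{n,i}}-stochastically dominated by X. -/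
open MeasureTheory Filter Set Topology

private lemma rc_term {Ω : Type*} [MeasurableSpace Ω] (μ : Measure Ω) [IsProbabilityMeasure μ]
    (Z : Ω → ℝ) (x : ℝ) :
    Tendsto (fun y => (μ {ω | |Z ω| > y}).toReal) (𝓝[>] x)
      (𝓝 ((μ {ω | |Z ω| > x}).toReal)) := by
  have hanti : Antitone (fun y => μ {ω | |Z ω| > y}) := by
    intro y z hyz
    exact measure_mono (fun ω h => lt_of_le_of_lt hyz h)
  have hten : Tendsto (fun y => μ {ω | |Z ω| > y}) (𝓝[>] x)
      (𝓝 (sSup ((fun y => μ {ω | |Z ω| > y}) '' Ioi x))) :=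
    hanti.tendsto_nhdsGT x
  have hkey : sSup ((fun y => μ {ω | |Z ω| > y}) '' Ioi x) = μ {ω | |Z ω| > x} := by
    apply le_antisymm
    · apply sSup_le
      rintro p ⟨y, hy, rfl⟩
      exact hanti (le_of_lt hy)
    · have hU : {ω | |Z ω| > x} = ⋃ m : ℕ, {ω | |Z ω| > x + 1 / (m + 1)} := by
        ext ω
        simp only [mem_setOf_eq, mem_iUnion]
        constructor
        · intro h
          obtain ⟨m, hm⟩ := exists_nat_one_div_lt (sub_pos.mpr h)
          exact ⟨m, by push_cast at hm ⊢; linarith⟩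
        · rintro ⟨m, hm⟩
          have : (0:ℝ) < 1 / (m + 1) := by positivity
          linarith
      have hmono : Monotone (fun m : ℕ => {ω | |Z ω| > x + 1 / (m + 1)}) := by
        intro m m' hmm ω h
        have h1 : (1:ℝ) / (m' + 1) ≤ 1 / (m + 1) := by
          apply one_div_le_one_div_of_le (by positivity)
          exact_mod_cast by exact_mod_cast add_le_add_left (Nat.cast_le.mpr hmm) 1
        simp only [mem_setOf_eq] at h ⊢
        linarith
      rw [hU, hmono.directed_le.measure_iUnion]
      apply iSup_le
      intro m
      apply le_sSup
      exact ⟨x + 1 / (m + 1), by simp [mem_Ioi]; positivity, rfl⟩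
  rw [hkey] at hten
  exact (ENNReal.tendsto_toReal (measure_ne_top μ _)).comp hten

/-- With `F(x) = 1 − (1/C₀) sup_n Σ_{i=1}^{k_n} a_{n,i} P(|X_{n,i}| > x)`,
`F` is the distribution function of a random variable `X` iff `lim_{x→∞} F(x) = 1`; and in
that case `{X_{n,i}}` is `{a_{n,i}}`-stochastically dominated by `X`. -/
theorem statement2
    {Ω : Type*} [MeasurableSpace Ω] (μ : Measure Ω) [IsProbabilityMeasure μ]
    (k : ℕ → ℕ) (hk : ∀ n, 0 < k n)
    (X : ℕ → ℕ → Ω → ℝ) (hXmeas : ∀ n i, Measurable (X n i))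
    (a : ℕ → ℕ → ℝ) (ha : ∀ n i, 0 ≤ a n i)
    (C0 : ℝ) (hC0 : 0 < C0)
    (hsup : IsLUB (Set.range fun n => ∑ i ∈ Finset.Icc 1 (k n), a n i) C0)
    (F : ℝ → ℝ)
    (hF : ∀ x : ℝ, F x = 1 - (1 / C0) * ⨆ n : ℕ, ∑ i ∈ Finset.Icc 1 (k n),
      a n i * (μ {ω | |X n i ω| > x}).toReal) :
    ((∃ ν : Measure ℝ, IsProbabilityMeasure ν ∧ ∀ x : ℝ, F x = (ν (Set.Iic x)).toReal)
        ↔ Tendsto F atTop (nhds 1))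
      ∧ ∀ ν : Measure ℝ, IsProbabilityMeasure ν → (∀ x : ℝ, F x = (ν (Set.Iic x)).toReal) →
          ∀ x : ℝ, (⨆ n : ℕ, ∑ i ∈ Finset.Icc 1 (k n),
              a n i * (μ {ω | |X n i ω| > x}).toReal)
            ≤ C0 * (ν {y : ℝ | |y| > x}).toReal := by
  set S : ℕ → ℝ → ℝ := fun n x => ∑ i ∈ Finset.Icc 1 (k n),
      a n i * (μ {ω | |X n i ω| > x}).toReal with hS
  set G : ℝ → ℝ := fun x => ⨆ n : ℕ, S n x with hG
  have hterm_le : ∀ n i x, a n i * (μ {ω | |X n i ω| > x}).toReal ≤ a n i := by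
    intro n i x
    have h1 : (μ {ω | |X n i ω| > x}).toReal ≤ 1 := by
      rw [show (1:ℝ) = (μ univ).toReal by simp]
      exact ENNReal.toReal_mono (measure_ne_top μ _) (measure_mono (subset_univ _))
    calc a n i * (μ {ω | |X n i ω| > x}).toReal ≤ a n i * 1 :=
          mul_le_mul_of_nonneg_left h1 (ha n i)
      _ = a n i := mul_one _
  have hSle : ∀ n x, S n x ≤ C0 := by
    intro n x
    calc S n x ≤ ∑ i ∈ Finset.Icc 1 (k n), a n i :=
          Finset.sum_le_sum fun i _ => hterm_le n i x
      _ ≤ C0 := hsup.1 ⟨n, rfl⟩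
  have hS0 : ∀ n x, 0 ≤ S n x := by
    intro n x
    exact Finset.sum_nonneg fun i _ => mul_nonneg (ha n i) ENNReal.toReal_nonneg
  have hbdd : ∀ x, BddAbove (Set.range fun n => S n x) := by
    intro x
    exact ⟨C0, by rintro p ⟨n, rfl⟩; exact hSle n x⟩
  have hGle : ∀ x, G x ≤ C0 := fun x => ciSup_le fun n => hSle n x
  have hG0 : ∀ x, 0 ≤ G x := fun x => le_trans (hS0 0 x) (le_ciSup (hbdd x) 0)
  have hSanti : ∀ n, Antitone (S n) := by
    intro n x y hxy
    apply Finset.sum_le_sum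
    intro i _
    apply mul_le_mul_of_nonneg_left _ (ha n i)
    exact ENNReal.toReal_mono (measure_ne_top μ _)
      (measure_mono fun ω h => lt_of_le_of_lt hxy h)
  have hGanti : Antitone G := by
    intro x y hxy
    exact ciSup_le fun n => le_trans (hSanti n hxy) (le_ciSup (hbdd x) n)
  have hFG : ∀ x, F x = 1 - (1 / C0) * G x := hF
  have hGF : ∀ x, G x = C0 * (1 - F x) := by
    intro x
    rw [hFG x]
    field_simp
    ring
  have hFmono : Monotone F := by
    intro x y hxy
    rw [hFG x, hFG y]
    have := hGanti hxy
    have h1 : (0:ℝ) < 1 / C0 := by positivity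
    nlinarith
  -- right continuity of G
  have hGrc : ∀ x, ContinuousWithinAt G (Ici x) x := by
    intro x
    rw [ContinuousWithinAt, Metric.tendsto_nhdsWithin_nhds]
    intro ε hε
    -- find n with S n x close to G x
    obtain ⟨n, hn⟩ : ∃ n, G x - ε / 2 < S n x := by
      apply exists_lt_of_lt_ciSup
      linarith
    -- find y > x with S n y close to S n x
    have hSten : Tendsto (S n) (𝓝[>] x) (𝓝 (S n x)) := by
      apply tendsto_finset_sum
      intro i _
      exact (rc_term μ (X n i) x).const_mul (a n i)
    have hev : ∀ᶠ y in 𝓝[>] x, S n x - ε / 2 < S n y :=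
      hSten.eventually (eventually_gt_nhds (by linarith))
    obtain ⟨y, hy1, hy2⟩ := (hev.and self_mem_nhdsWithin).exists
    refine ⟨y - x, by simpa using hy2, ?_⟩
    intro z hz hdz
    have hzy : z < y := by
      rw [Real.dist_eq, abs_of_nonneg (by simpa using hz)] at hdz
      linarith
    have h1 : G z ≤ G x := hGanti hz
    have h2 : S n y ≤ S n z := hSanti n (le_of_lt hzy)
    have h3 : S n z ≤ G z := le_ciSup (hbdd z) n
    rw [Real.dist_eq, abs_of_nonpos (by linarith)]
    linarith
  have hFrc : ∀ x, ContinuousWithinAt F (Ici x) x := by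
    intro x
    have : F = fun y => 1 - (1 / C0) * G y := funext hFG
    rw [this]
    exact (continuousWithinAt_const.mul (hGrc x)).const_sub 1
  -- F tends to 0 at -∞
  have hFbot : Tendsto F atBot (𝓝 0) := by
    have hev : ∀ᶠ x in atBot, F x = 0 := by
      filter_upwards [eventually_lt_atBot (0:ℝ)] with x hx
      have hSx : ∀ n, S n x = ∑ i ∈ Finset.Icc 1 (k n), a n i := by
        intro n
        apply Finset.sum_congr rfl
        intro i _
        have : {ω | |X n i ω| > x} = univ := by
          ext ω; simp only [mem_setOf_eq, mem_univ, iff_true]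
          exact lt_of_lt_of_le hx (abs_nonneg _)
        rw [this]
        simp
      have hGx : G x = C0 := by
        rw [hG]
        simp only [hSx]
        rw [show (⨆ n : ℕ, ∑ i ∈ Finset.Icc 1 (k n), a n i)
            = sSup (Set.range fun n => ∑ i ∈ Finset.Icc 1 (k n), a n i) from rfl]
        exact hsup.csSup_eq ⟨_, ⟨0, rfl⟩⟩
      rw [hFG x, hGx]
      field_simp
      ring
    exact Tendsto.congr' (hev.mono fun x h => h.symm) tendsto_const_nhds
  constructor
  · constructor
    · rintro ⟨ν, hν, hcdf⟩
      have h1 : Tendsto (fun x => ν (Iic x)) atTop (𝓝 (ν univ)) :=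
        tendsto_measure_Iic_atTop ν
      rw [measure_univ] at h1
      have h2 : Tendsto (fun x => (ν (Iic x)).toReal) atTop (𝓝 (ENNReal.toReal 1)) :=
        (ENNReal.tendsto_toReal ENNReal.one_ne_top).comp h1
      simp only [ENNReal.toReal_one] at h2
      exact h2.congr fun x => (hcdf x).symm
    · intro htop
      -- construct the Stieltjes measure
      set sf : StieltjesFunction ℝ := ⟨F, hFmono, hFrc⟩ with hsf
      have hsfF : ∀ x, sf x = F x := fun x => rfl
      have hIic : ∀ x, sf.measure (Iic x) = ENNReal.ofReal (F x) := by
        intro x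
        rw [sf.measure_Iic hFbot x]
        simp [hsfF]
      have huniv : sf.measure univ = 1 := by
        rw [sf.measure_univ hFbot htop]
        simp
      have hFnonneg : ∀ x, 0 ≤ F x := by
        intro x
        rw [hFG x]
        have h1 : (1 / C0) * G x ≤ (1 / C0) * C0 :=
          mul_le_mul_of_nonneg_left (hGle x) (by positivity)
        rw [one_div_mul_cancel hC0.ne'] at h1
        linarith
      refine ⟨sf.measure, ⟨huniv⟩, ?_⟩
      intro x
      rw [hIic x, ENNReal.toReal_ofReal (hFnonneg x)]
  · intro ν hν hcdf x
    have hcompl : (Iic x)ᶜ = Ioi x := by ext y; simp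
    have hIoi : (ν (Ioi x)).toReal = 1 - F x := by
      have h1 := measure_compl (measurableSet_Iic : MeasurableSet (Iic x)) (measure_ne_top ν _)
      rw [hcompl, measure_univ] at h1
      rw [h1, ENNReal.toReal_sub_of_le prob_le_one ENNReal.one_ne_top, ENNReal.toReal_one,
        ← hcdf x]
    have hsub : Ioi x ⊆ {y : ℝ | |y| > x} := by
      intro y hy
      exact lt_of_lt_of_le hy (le_abs_self y)
    have h2 : (ν (Ioi x)).toReal ≤ (ν {y : ℝ | |y| > x}).toReal :=
      ENNReal.toReal_mono (measure_ne_top ν _) (measure_mono hsub)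
    calc (⨆ n : ℕ, S n x) = G x := rfl
      _ = C0 * (1 - F x) := hGF x
      _ = C0 * (ν (Ioi x)).toReal := by rw [hIoi]
      _ ≤ C0 * (ν {y : ℝ | |y| > x}).toReal :=
          mul_le_mul_of_nonneg_left h2 (le_of_lt hC0)
end

section
/- Let {k_n, n ≥ 1} be a sequence of positive integers, {X_{n,i}, 1 ≤ i ≤ k_n, n ≥ 1} an array of random variables, and {a_{n,i}, 1 ≤ i ≤ k_n, n ≥ 1} an array of nonnegative real numbers with sup_{n≥1} Σ_{i=1}^{k_n} a_{n,i} = C_0 ∈ (0,∞). Then there exists a random variable X such that sup_{n≥1} Σ_{i=1}^{k_n} a_{n,i} P(|X_{n,i}| > x) ≤ C_0 P(|X| > x) for all x ∈ ℝ if and only if there exist a random variable Y and a finite constant C > 0 such that sup_{n≥1} Σ_{i=1}^{k_n} a_{n,i} P(|X_{n,i}| > x) ≤ C P(|Y| > x) for all x ∈ ℝ. -/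
open MeasureTheory Filter Set

open Topology
open scoped ENNReal NNReal

/-- There exists a random variable `X` with
`sup_n Σ_{i=1}^{k_n} a_{n,i} P(|X_{n,i}| > x) ≤ C₀ P(|X| > x)` for all `x` iff there exist a
random variable `Y` and a constant `C > 0` with
`sup_n Σ_{i=1}^{k_n} a_{n,i} P(|X_{n,i}| > x) ≤ C P(|Y| > x)` for all `x`.
(Random variables are represented by their laws, i.e. probability measures on `ℝ`.) -/
theorem statement3
    {Ω : Type*} [MeasurableSpace Ω] (μ : Measure Ω) [IsProbabilityMeasure μ]
    (k : ℕ → ℕ) (hk : ∀ n, 0 < k n)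
    (X : ℕ → ℕ → Ω → ℝ) (hXmeas : ∀ n i, Measurable (X n i))
    (a : ℕ → ℕ → ℝ) (ha : ∀ n i, 0 ≤ a n i)
    (C0 : ℝ) (hC0 : 0 < C0)
    (hsup : IsLUB (Set.range fun n => ∑ i ∈ Finset.Icc 1 (k n), a n i) C0) :
    (∃ ν : Measure ℝ, IsProbabilityMeasure ν ∧ ∀ x : ℝ,
        (⨆ n : ℕ, ∑ i ∈ Finset.Icc 1 (k n), a n i * (μ {ω | |X n i ω| > x}).toReal)
          ≤ C0 * (ν {y : ℝ | |y| > x}).toReal)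
      ↔ (∃ (ν : Measure ℝ) (C : ℝ), IsProbabilityMeasure ν ∧ 0 < C ∧ ∀ x : ℝ,
          (⨆ n : ℕ, ∑ i ∈ Finset.Icc 1 (k n), a n i * (μ {ω | |X n i ω| > x}).toReal)
            ≤ C * (ν {y : ℝ | |y| > x}).toReal) := by
  classical
  constructor
  · rintro ⟨ν, hν, h⟩
    exact ⟨ν, C0, hν, hC0, h⟩
  · rintro ⟨ν, C, hν, hC, h⟩
    -- the tail set is measurable
    have hmeas : ∀ x : ℝ, MeasurableSet {y : ℝ | |y| > x} := fun x =>
      (isOpen_lt continuous_const continuous_abs).measurableSet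
    -- abbreviation for the tail function of ν
    set q : ℝ → ℝ := fun x => (ν {y : ℝ | |y| > x}).toReal with hq
    have hq_anti : ∀ x y : ℝ, x ≤ y → q y ≤ q x := by
      intro x y hxy
      refine ENNReal.toReal_mono (measure_ne_top ν _) (measure_mono ?_)
      intro z hz
      exact lt_of_le_of_lt hxy hz
    -- the sup is bounded by C0
    have hSle : ∀ x : ℝ,
        (⨆ n : ℕ, ∑ i ∈ Finset.Icc 1 (k n), a n i * (μ {ω | |X n i ω| > x}).toReal) ≤ C0 := by
      intro x
      refine ciSup_le fun n => ?_
      calc ∑ i ∈ Finset.Icc 1 (k n), a n i * (μ {ω | |X n i ω| > x}).toReal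
          ≤ ∑ i ∈ Finset.Icc 1 (k n), a n i := by
            refine Finset.sum_le_sum fun i _ => ?_
            have h1 : (μ {ω | |X n i ω| > x}).toReal ≤ 1 := by
              have := ENNReal.toReal_mono (measure_ne_top μ univ)
                (measure_mono (Set.subset_univ {ω | |X n i ω| > x}))
              simpa using this
            nlinarith [ha n i]
        _ ≤ C0 := hsup.1 ⟨n, rfl⟩
    -- tails of ν tend to 0 along ℕ
    have htends : Tendsto (fun n : ℕ => ν {y : ℝ | |y| > (n : ℝ)}) atTop (𝓝 0) := by
      have h0 : (⋂ n : ℕ, {y : ℝ | |y| > (n : ℝ)}) = (∅ : Set ℝ) := by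
        ext y
        simp only [Set.mem_iInter, Set.mem_setOf_eq, Set.mem_empty_iff_false, iff_false, not_forall]
        obtain ⟨n, hn⟩ := exists_nat_gt |y|
        exact ⟨n, not_lt.2 hn.le⟩
      have := tendsto_measure_iInter_atTop (μ := ν)
        (s := fun n : ℕ => {y : ℝ | |y| > (n : ℝ)})
        (fun n => (hmeas _).nullMeasurableSet)
        (fun m n hmn => fun y hy => show (m:ℝ) < |y| from lt_of_le_of_lt (Nat.cast_le.2 hmn) hy)
        ⟨0, measure_ne_top ν _⟩
      rw [h0] at this
      simpa [Function.comp_def] using this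
    have htends' : Tendsto (fun n : ℕ => q (n : ℝ)) atTop (𝓝 0) := by
      have := (ENNReal.tendsto_toReal (by simp : (0 : ℝ≥0∞) ≠ ⊤)).comp htends
      simpa [hq, Function.comp_def] using this
    -- choose N k with C * q (N k) ≤ C0 * (1/2)^(k+2)
    have hex : ∀ m : ℕ, ∃ N : ℕ, C * q (N : ℝ) ≤ C0 * (2⁻¹ : ℝ) ^ (m + 2) := by
      intro m
      have hpos : (0 : ℝ) < C0 * (2⁻¹ : ℝ) ^ (m + 2) / C := by positivity
      obtain ⟨N, hN⟩ := (htends'.eventually (gt_mem_nhds hpos)).exists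
      refine ⟨N, ?_⟩
      have h1 : C * q (N : ℝ) < C * (C0 * (2⁻¹ : ℝ) ^ (m + 2) / C) :=
        (mul_lt_mul_iff_right₀ hC).2 hN
      have h2 : C * (C0 * (2⁻¹ : ℝ) ^ (m + 2) / C) = C0 * (2⁻¹ : ℝ) ^ (m + 2) := by
        field_simp
      linarith
    choose N hN using hex
    -- the sequence of atoms
    set b : ℕ → ℕ := fun m => m + ∑ j ∈ Finset.range (m + 1), N j with hb
    have hb_mono : Monotone b := by
      intro i j hij
      exact Nat.add_le_add hij (Finset.sum_le_sum_of_subset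
        (Finset.range_subset_range.2 (Nat.add_le_add_right hij 1)))
    have hb_ge_self : ∀ m, m ≤ b m := fun m => Nat.le_add_right m _
    have hb_ge_N : ∀ m, N m ≤ b m := by
      intro m
      have : N m ≤ ∑ j ∈ Finset.range (m + 1), N j :=
        Finset.single_le_sum (fun j _ => Nat.zero_le _) (Finset.self_mem_range_succ m)
      exact le_trans this (Nat.le_add_left _ _)
    -- key bound : C * q (b m) ≤ C0 * (1/2)^(m+2)
    have hqb : ∀ m, C * q ((b m : ℝ)) ≤ C0 * (2⁻¹ : ℝ) ^ (m + 2) := by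
      intro m
      refine le_trans ?_ (hN m)
      have := hq_anti ((N m : ℝ)) ((b m : ℝ)) (Nat.cast_le.2 (hb_ge_N m))
      nlinarith
    -- the new measure
    set ν' : Measure ℝ :=
      Measure.sum (fun m : ℕ => ((2⁻¹ : ℝ≥0∞) ^ (m + 1)) • Measure.dirac ((b m : ℕ) : ℝ)) with hν'
    have htsum : (∑' m : ℕ, (2⁻¹ : ℝ≥0∞) ^ (m + 1)) = 1 := by
      have : (∑' m : ℕ, (2⁻¹ : ℝ≥0∞) ^ (m + 1)) = 2⁻¹ * ∑' m : ℕ, (2⁻¹ : ℝ≥0∞) ^ m := by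
        rw [← ENNReal.tsum_mul_left]
        congr 1
        ext m
        ring
      rw [this, ENNReal.tsum_geometric, ENNReal.one_sub_inv_two, inv_inv]
      exact ENNReal.inv_mul_cancel two_ne_zero ENNReal.ofNat_ne_top
    have hν'apply : ∀ x : ℝ, ν' {y : ℝ | |y| > x}
        = ∑' m : ℕ, (2⁻¹ : ℝ≥0∞) ^ (m + 1) * ({y : ℝ | |y| > x}.indicator 1 ((b m : ℕ) : ℝ)) := by
      intro x
      rw [hν', Measure.sum_apply _ (hmeas x)]
      congr 1
      ext m
      rw [Measure.smul_apply, Measure.dirac_apply' _ (hmeas x), smul_eq_mul]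
    have hν'prob : IsProbabilityMeasure ν' := by
      constructor
      rw [hν', Measure.sum_apply _ MeasurableSet.univ]
      simp only [Measure.smul_apply, Measure.dirac_apply' _ MeasurableSet.univ,
        Set.indicator_univ, Pi.one_apply, smul_eq_mul, mul_one]
      exact htsum
    have hν'le_one : ∀ s : Set ℝ, ν' s ≤ 1 := fun s => prob_le_one
    refine ⟨ν', hν'prob, fun x => ?_⟩
    by_cases hx : x < ((b 0 : ℕ) : ℝ)
    · -- all atoms are in the tail set, so the tail has full measure
      have hfull : ν' {y : ℝ | |y| > x} = 1 := by
        rw [hν'apply x]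
        have hind : ∀ m : ℕ, ({y : ℝ | |y| > x}.indicator 1 ((b m : ℕ) : ℝ) : ℝ≥0∞) = 1 := by
          intro m
          rw [Set.indicator_of_mem]
          · rfl
          · have h1 : ((b 0 : ℕ) : ℝ) ≤ ((b m : ℕ) : ℝ) := Nat.cast_le.2 (hb_mono (Nat.zero_le m))
            have h2 : ((b m : ℕ) : ℝ) ≤ |((b m : ℕ) : ℝ)| := le_abs_self _
            exact lt_of_lt_of_le hx (le_trans h1 h2)
        simp only [hind, mul_one]
        exact htsum
      rw [hfull]
      simpa using hSle x
    · -- x ≥ b 0 : take the largest index K with b K ≤ x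
      push_neg at hx
      have hx0 : (0 : ℝ) ≤ x := le_trans (Nat.cast_nonneg _) hx
      haveI : DecidablePred (fun m : ℕ => ((b m : ℕ) : ℝ) ≤ x) := Classical.decPred _
      set M : ℕ := ⌈x⌉₊ with hM
      set K : ℕ := Nat.findGreatest (fun m => ((b m : ℕ) : ℝ) ≤ x) M with hK
      have hPK : ((b K : ℕ) : ℝ) ≤ x := by
        have h0M : (0 : ℕ) ≤ M := Nat.zero_le _
        exact Nat.findGreatest_spec (P := fun m => ((b m : ℕ) : ℝ) ≤ x) h0M hx
      have hbK1 : x < ((b (K + 1) : ℕ) : ℝ) := by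
        by_contra hcon
        push_neg at hcon
        have hK1M : K + 1 ≤ M := by
          have : ((K + 1 : ℕ) : ℝ) ≤ x := le_trans (Nat.cast_le.2 (hb_ge_self (K + 1))) hcon
          have := le_trans this (Nat.le_ceil x)
          exact_mod_cast Nat.cast_le.1 (le_trans ‹((K + 1 : ℕ) : ℝ) ≤ x› (Nat.le_ceil x))
        exact Nat.findGreatest_is_greatest (P := fun m => ((b m : ℕ) : ℝ) ≤ x) (Nat.lt_succ_self K) hK1M hcon
      -- lower bound on the tail of ν'
      have htail : ((2⁻¹ : ℝ≥0∞) ^ (K + 2)) ≤ ν' {y : ℝ | |y| > x} := by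
        rw [hν'apply x]
        have hmem : ((b (K + 1) : ℕ) : ℝ) ∈ {y : ℝ | |y| > x} := by
          have : ((b (K + 1) : ℕ) : ℝ) ≤ |((b (K + 1) : ℕ) : ℝ)| := le_abs_self _
          exact lt_of_lt_of_le hbK1 this
        have := ENNReal.le_tsum (f := fun m : ℕ =>
          (2⁻¹ : ℝ≥0∞) ^ (m + 1) * ({y : ℝ | |y| > x}.indicator 1 ((b m : ℕ) : ℝ))) (K + 1)
        rw [Set.indicator_of_mem hmem] at this
        simpa using this
      have htail' : ((2⁻¹ : ℝ) ^ (K + 2)) ≤ (ν' {y : ℝ | |y| > x}).toReal := by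
        have h1 : (((2⁻¹ : ℝ≥0∞) ^ (K + 2)).toReal) ≤ (ν' {y : ℝ | |y| > x}).toReal :=
          ENNReal.toReal_mono (measure_ne_top ν' _) htail
        have h2 : (((2⁻¹ : ℝ≥0∞) ^ (K + 2)).toReal) = (2⁻¹ : ℝ) ^ (K + 2) := by
          simp [ENNReal.toReal_pow]
        linarith [h1, h2 ▸ h1]
      -- conclude
      calc (⨆ n : ℕ, ∑ i ∈ Finset.Icc 1 (k n), a n i * (μ {ω | |X n i ω| > x}).toReal)
          ≤ C * q x := h x
        _ ≤ C * q ((b K : ℕ) : ℝ) := by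
            have := hq_anti ((b K : ℕ) : ℝ) x hPK
            nlinarith
        _ ≤ C0 * (2⁻¹ : ℝ) ^ (K + 2) := hqb K
        _ ≤ C0 * (ν' {y : ℝ | |y| > x}).toReal := by nlinarith
end

section
/- Let {k_n, n ≥ 1} be a sequence of positive integers and {X_{n,i}, 1 ≤ i ≤ k_n, n ≥ 1} an array of random variables. Define F(x) = 1 − sup_{n≥1} (1/k_n) Σ_{i=1}^{k_n} P(|X_{n,i}| > x) for x ∈ ℝ. Then F is the distribution function of a random variable X if and only if lim_{x→∞} F(x) = 1; and in that case {X_{n,i}} is stochastically dominated in the Cesàro sense by X. -/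
open MeasureTheory Filter Set
open scoped ENNReal NNReal Topology

/-- With `F(x) = 1 − sup_n (1/k_n) Σ_{i=1}^{k_n} P(|X_{n,i}| > x)`, `F` is
the distribution function of a random variable `X` iff `lim_{x→∞} F(x) = 1`; and in that case
`{X_{n,i}}` is stochastically dominated in the Cesàro sense by `X`. -/
theorem statement6
    {Ω : Type*} [MeasurableSpace Ω] (μ : Measure Ω) [IsProbabilityMeasure μ]
    (k : ℕ → ℕ) (hk : ∀ n, 0 < k n)
    (X : ℕ → ℕ → Ω → ℝ) (hXmeas : ∀ n i, Measurable (X n i))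
    (F : ℝ → ℝ)
    (hF : ∀ x : ℝ, F x = 1 - ⨆ n : ℕ, (1 / (k n : ℝ)) * ∑ i ∈ Finset.Icc 1 (k n),
      (μ {ω | |X n i ω| > x}).toReal) :
    ((∃ ν : Measure ℝ, IsProbabilityMeasure ν ∧ ∀ x : ℝ, F x = (ν (Set.Iic x)).toReal)
        ↔ Tendsto F atTop (nhds 1))
      ∧ ∀ ν : Measure ℝ, IsProbabilityMeasure ν → (∀ x : ℝ, F x = (ν (Set.Iic x)).toReal) →
          ∃ C : ℝ, 0 < C ∧ ∀ x : ℝ,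
            (⨆ n : ℕ, (1 / (k n : ℝ)) * ∑ i ∈ Finset.Icc 1 (k n),
                (μ {ω | |X n i ω| > x}).toReal)
              ≤ C * (ν {y : ℝ | |y| > x}).toReal := by
  set g : ℕ → ℝ → ℝ := fun n x => (1 / (k n : ℝ)) * ∑ i ∈ Finset.Icc 1 (k n),
      (μ {ω | |X n i ω| > x}).toReal with hg
  set S : ℝ → ℝ := fun x => ⨆ n : ℕ, g n x with hS
  have hFS : ∀ x, F x = 1 - S x := hF
  -- basic bounds on g
  have hg0 : ∀ n x, 0 ≤ g n x := by
    intro n x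
    apply mul_nonneg (by positivity)
    exact Finset.sum_nonneg fun i _ => ENNReal.toReal_nonneg
  have hg1 : ∀ n x, g n x ≤ 1 := by
    intro n x
    have h1 : ∀ i ∈ Finset.Icc 1 (k n), (μ {ω | |X n i ω| > x}).toReal ≤ 1 := by
      intro i _
      calc (μ {ω | |X n i ω| > x}).toReal ≤ (1 : ℝ≥0∞).toReal :=
            ENNReal.toReal_mono ENNReal.one_ne_top prob_le_one
        _ = 1 := by simp
    have hsum : ∑ i ∈ Finset.Icc 1 (k n), (μ {ω | |X n i ω| > x}).toReal ≤ (k n : ℝ) := by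
      calc ∑ i ∈ Finset.Icc 1 (k n), (μ {ω | |X n i ω| > x}).toReal
          ≤ ∑ _i ∈ Finset.Icc 1 (k n), (1 : ℝ) := Finset.sum_le_sum h1
        _ = (k n : ℝ) := by simp [Nat.card_Icc]
    calc g n x ≤ (1 / (k n : ℝ)) * (k n : ℝ) :=
          mul_le_mul_of_nonneg_left hsum (by positivity)
      _ = 1 := by
          rw [one_div, inv_mul_cancel₀ (by exact_mod_cast (hk n).ne' : ((k n : ℝ)) ≠ 0)]
  have hbdd : ∀ x, BddAbove (Set.range fun n => g n x) :=
    fun x => ⟨1, by rintro y ⟨n, rfl⟩; exact hg1 n x⟩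
  have hganti : ∀ n, Antitone (g n) := by
    intro n x y hxy
    apply mul_le_mul_of_nonneg_left _ (by positivity)
    apply Finset.sum_le_sum
    intro i _
    apply ENNReal.toReal_mono (measure_ne_top μ _)
    apply measure_mono
    intro ω hω
    exact lt_of_le_of_lt hxy hω
  have hSanti : Antitone S := by
    intro x y hxy
    apply ciSup_le
    intro n
    exact le_trans (hganti n hxy) (le_ciSup (hbdd x) n)
  have hS0 : ∀ x, 0 ≤ S x := fun x => le_trans (hg0 0 x) (le_ciSup (hbdd x) 0)
  have hS1 : ∀ x, S x ≤ 1 := fun x => ciSup_le fun n => hg1 n x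
  -- S x = 1 for x < 0
  have hSneg : ∀ x : ℝ, x < 0 → S x = 1 := by
    intro x hx
    have : ∀ n, g n x = 1 := by
      intro n
      have hs : ∀ i, {ω | |X n i ω| > x} = Set.univ := by
        intro i
        ext ω
        simp only [Set.mem_setOf_eq, Set.mem_univ, iff_true]
        exact lt_of_lt_of_le hx (abs_nonneg _)
      simp only [hg, hs, measure_univ, ENNReal.toReal_one, Finset.sum_const, Nat.card_Icc,
        Nat.add_sub_cancel, nsmul_eq_mul, mul_one]
      rw [one_div, inv_mul_cancel₀ (by exact_mod_cast (hk n).ne' : ((k n : ℝ)) ≠ 0)]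
    simp only [hS, this, ciSup_const]
  -- right continuity of g n
  have hgright : ∀ n x, Tendsto (fun m : ℕ => g n (x + 1 / (m + 1))) atTop (𝓝 (g n x)) := by
    intro n x
    apply Tendsto.const_mul
    apply tendsto_finset_sum
    intro i _
    have hmono : Monotone (fun m : ℕ => {ω | |X n i ω| > x + 1 / (m + 1)}) := by
      intro a b hab ω hω
      simp only [Set.mem_setOf_eq] at hω ⊢
      refine lt_of_le_of_lt ?_ hω
      gcongr
    have hunion : (⋃ m : ℕ, {ω | |X n i ω| > x + 1 / (m + 1 : ℝ)}) = {ω | |X n i ω| > x} := by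
      ext ω
      simp only [Set.mem_iUnion, Set.mem_setOf_eq]
      constructor
      · rintro ⟨m, hm⟩
        refine lt_trans ?_ hm
        have : (0:ℝ) < 1 / (m + 1) := by positivity
        linarith
      · intro hω
        obtain ⟨m, hm⟩ := exists_nat_one_div_lt (sub_pos.mpr hω)
        exact ⟨m, by linarith⟩
    have := tendsto_measure_iUnion_atTop (μ := μ) hmono
    rw [hunion] at this
    exact (ENNReal.tendsto_toReal (measure_ne_top μ _)).comp this
  -- right continuity of S
  have hSright : ∀ x, ContinuousWithinAt S (Set.Ici x) x := by
    intro x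
    rw [← continuousWithinAt_Ioi_iff_Ici]
    have hlim : Tendsto S (nhdsWithin x (Set.Ioi x)) (𝓝 (sSup (S '' Set.Ioi x))) :=
      hSanti.tendsto_nhdsGT x
    have hsup : sSup (S '' Set.Ioi x) = S x := by
      have hne : (S '' Set.Ioi x).Nonempty := ⟨S (x + 1), ⟨x + 1, by simp, rfl⟩⟩
      have hbdd' : BddAbove (S '' Set.Ioi x) := by
        refine ⟨1, ?_⟩
        rintro y ⟨z, _, rfl⟩
        exact hS1 z
      apply le_antisymm
      · apply csSup_le hne
        rintro y ⟨z, hz, rfl⟩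
        exact hSanti (le_of_lt hz)
      · apply ciSup_le
        intro n
        refine le_of_tendsto (hgright n x) (Eventually.of_forall fun m => ?_)
        have hmem : x + 1 / (m + 1 : ℝ) ∈ Set.Ioi x := by
          simp only [Set.mem_Ioi]
          have : (0:ℝ) < 1 / (m + 1) := by positivity
          linarith
        calc g n (x + 1 / (m + 1)) ≤ S (x + 1 / (m + 1)) := le_ciSup (hbdd _) n
          _ ≤ sSup (S '' Set.Ioi x) := le_csSup hbdd' ⟨_, hmem, rfl⟩
    rw [hsup] at hlim
    exact hlim
  -- F as a Stieltjes function
  have hFmono : Monotone F := by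
    intro x y hxy
    rw [hFS x, hFS y]
    linarith [hSanti hxy]
  have hFright : ∀ x, ContinuousWithinAt F (Set.Ici x) x := by
    intro x
    have : F = fun y => 1 - S y := funext hFS
    rw [this]
    exact (continuousWithinAt_const.sub (hSright x))
  have hFbot : Tendsto F atBot (𝓝 0) := by
    have hev : F =ᶠ[atBot] fun _ => (0 : ℝ) := by
      filter_upwards [eventually_lt_atBot (0 : ℝ)] with x hx
      rw [hFS x, hSneg x hx, sub_self]
    exact Tendsto.congr' hev.symm tendsto_const_nhds
  constructor
  · constructor
    · rintro ⟨ν, hνP, hνF⟩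
      have h1 : Tendsto (fun x : ℝ => ν (Set.Iic x)) atTop (𝓝 (ν Set.univ)) :=
        tendsto_measure_Iic_atTop ν
      rw [measure_univ] at h1
      have h2 : Tendsto (fun x : ℝ => (ν (Set.Iic x)).toReal) atTop (𝓝 (1 : ℝ≥0∞).toReal) :=
        (ENNReal.tendsto_toReal ENNReal.one_ne_top).comp h1
      simp only [ENNReal.toReal_one] at h2
      exact h2.congr fun x => (hνF x).symm
    · intro htop
      set f : StieltjesFunction ℝ := ⟨F, hFmono, hFright⟩ with hf
      refine ⟨f.measure, f.isProbabilityMeasure hFbot htop, fun x => ?_⟩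
      rw [f.measure_Iic hFbot x]
      rw [ENNReal.toReal_ofReal (by show (0:ℝ) ≤ F x - 0; rw [sub_zero, hFS x]; linarith [hS1 x])]
      show F x = F x - 0
      ring
  · intro ν hνP hνF
    refine ⟨1, one_pos, fun x => ?_⟩
    have hkey : S x = (ν (Set.Ioi x)).toReal := by
      have h1 : ν (Set.Ioi x) = 1 - ν (Set.Iic x) := by
        rw [← Set.compl_Iic]
        exact prob_compl_eq_one_sub measurableSet_Iic
      rw [h1, ENNReal.toReal_sub_of_le (prob_le_one) ENNReal.one_ne_top]
      have := hFS x
      rw [hνF x] at this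
      simp only [ENNReal.toReal_one]
      linarith
    rw [one_mul]
    show S x ≤ _
    rw [hkey]
    apply ENNReal.toReal_mono (measure_ne_top ν _)
    apply measure_mono
    intro y hy
    exact lt_of_lt_of_le hy (le_abs_self y)
end

section
/- Let {X_{n,i}, 1 ≤ i ≤ n, n ≥ 1} be an array of random variables and G(x) = sup_{n≥1} (1/n) Σ_{i=1}^n P(|X_{n,i}| > x). Let {b_n, n ≥ 1} be a nondecreasing sequence of positive real numbers satisfying Σ_{i=1}^n b_i/i² = O(b_n/n). Let {c_{n,i}, 1 ≤ i ≤ n, n ≥ 1} be an array of nonnegative real numbers satisfying 0 < A_n := Σ_{i=1}^n c_{n,i} ≤ C n for all n ≥ 1 and some constant C, set a_{n,i} = c_{n,i}/A_n, and let Ĝ(x) = sup_{n≥1} Σ_{i=1}^n a_{n,i} P(|X_{n,i}| > x). If lim_{k→∞} k·G(b_k) = 0 and lim_{k→∞} k·Ĝ(b_k) = 0, then (1/b_n) max_{j≤n} |Σ_{i=1}^j c_{n,i} X_{n,i}| → 0 in probability as n → ∞. -/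
open MeasureTheory Filter Set

private lemma sum_Icc_one_eq {M : Type*} [AddCommMonoid M] (g : ℕ → M) (n : ℕ) :
    ∑ k ∈ Finset.Icc 1 n, g k = ∑ j ∈ Finset.range n, g (j + 1) := by
  induction n with
  | zero => simp
  | succ m ih => rw [Finset.sum_Icc_succ_top (Nat.le_add_left 1 m), ih, Finset.sum_range_succ]

private lemma tele15 (b : ℕ → ℝ) (n : ℕ) :
    ∑ k ∈ Finset.Icc 1 n, (b (k + 1) - b k) = b (n + 1) - b 1 := by
  rw [sum_Icc_one_eq]
  exact Finset.sum_range_sub (fun j => b (j + 1)) n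

private lemma minb15 (b : ℕ → ℝ)
    (hbmono : ∀ m n, 1 ≤ m → m ≤ n → b m ≤ b n) (t : ℝ) :
    ∀ m : ℕ, min t (b (m + 1)) ≤
      b 1 + ∑ k ∈ Finset.Icc 1 m, (b (k + 1) - b k) * (if b k < t then (1:ℝ) else 0) := by
  intro m
  induction m with
  | zero => simpa using min_le_right t (b 1)
  | succ m ih =>
    rw [Finset.sum_Icc_succ_top (Nat.le_add_left 1 m)]
    by_cases h : b (m + 1) < t
    · have hall : ∑ k ∈ Finset.Icc 1 m, (b (k + 1) - b k) * (if b k < t then (1:ℝ) else 0)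
          = b (m + 1) - b 1 := by
        rw [← tele15 b m]
        refine Finset.sum_congr rfl fun k hk => ?_
        obtain ⟨hk1, hk2⟩ := Finset.mem_Icc.mp hk
        have : b k < t := lt_of_le_of_lt (hbmono k (m + 1) hk1 (by omega)) h
        simp [this]
      rw [hall, if_pos h]
      have h2 : min t (b (m + 1 + 1)) ≤ b (m + 1 + 1) := min_le_right _ _
      linarith
    · push_neg at h
      have h1 : min t (b (m + 1 + 1)) = t :=
        min_eq_left (h.trans (hbmono (m + 1) (m + 1 + 1) (by omega) (by omega)))
      have h2 : min t (b (m + 1)) = t := min_eq_left h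
      rw [h1]
      rw [h2] at ih
      have hnn : 0 ≤ (b (m + 1 + 1) - b (m + 1)) * (if b (m + 1) < t then (1:ℝ) else 0) := by
        have := hbmono (m + 1) (m + 1 + 1) (by omega) (by omega)
        split <;> linarith
      linarith

private lemma abel15 (b : ℕ → ℝ) (hb1 : 0 < b 1) :
    ∀ m : ℕ, ∑ k ∈ Finset.Icc 1 m, (b (k + 1) - b k) / k
      ≤ b (m + 1) / (m + 1) + ∑ k ∈ Finset.Icc 2 (m + 1), b k / (k * ((k:ℝ) - 1)) := by
  intro m
  induction m with
  | zero => simpa using hb1.le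
  | succ m ih =>
    rw [Finset.sum_Icc_succ_top (Nat.le_add_left 1 m),
      Finset.sum_Icc_succ_top (show 2 ≤ m + 1 + 1 by omega)]
    have h1 : ((m:ℝ) + 1) ≠ 0 := by positivity
    have h2 : ((m:ℝ) + 2) ≠ 0 := by positivity
    have key : b (m + 1) / ((m:ℝ) + 1) + (b (m + 1 + 1) - b (m + 1)) / ((m:ℝ) + 1)
        = b (m + 1 + 1) / ((m:ℝ) + 1 + 1)
          + b (m + 1 + 1) / (((m:ℝ) + 1 + 1) * (((m:ℝ) + 1 + 1) - 1)) := by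
      have h3 : ((m:ℝ) + 1 + 1) - 1 = (m:ℝ) + 1 := by ring
      rw [h3]
      field_simp
      ring
    push_cast
    push_cast at ih
    linarith

/-- WLLN for weighted sums: with `G(x) = sup_n (1/n) Σ P(|X_{n,i}| > x)`,
`b` nondecreasing positive with `Σ_{i=1}^n b_i/i² = O(b_n/n)`, nonnegative weights `c_{n,i}`
with `0 < A_n = Σ_{i=1}^n c_{n,i} ≤ C n`, `a_{n,i} = c_{n,i}/A_n` and
`Ĝ(x) = sup_n Σ a_{n,i} P(|X_{n,i}| > x)`, if `k G(b_k) → 0` and `k Ĝ(b_k) → 0` then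
`(1/b_n) max_{j≤n} |Σ_{i=1}^j c_{n,i} X_{n,i}| → 0` in probability. -/
theorem statement15
    {Ω : Type*} [MeasurableSpace Ω] (μ : Measure Ω) [IsProbabilityMeasure μ]
    (X : ℕ → ℕ → Ω → ℝ) (hXmeas : ∀ n i, Measurable (X n i))
    (G : ℝ → ℝ)
    (hG : ∀ x : ℝ, G x = ⨆ n : ℕ, (1 / (n : ℝ)) * ∑ i ∈ Finset.Icc 1 n,
      (μ {ω | |X n i ω| > x}).toReal)
    (b : ℕ → ℝ) (hbpos : ∀ n, 1 ≤ n → 0 < b n)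
    (hbmono : ∀ m n, 1 ≤ m → m ≤ n → b m ≤ b n)
    (hbO : ∃ C : ℝ, ∀ n, 1 ≤ n →
      ∑ i ∈ Finset.Icc 1 n, b i / (i : ℝ) ^ 2 ≤ C * (b n / (n : ℝ)))
    (c : ℕ → ℕ → ℝ) (hc : ∀ n i, 0 ≤ c n i)
    (A : ℕ → ℝ) (hA : ∀ n, A n = ∑ i ∈ Finset.Icc 1 n, c n i)
    (hApos : ∀ n, 1 ≤ n → 0 < A n)
    (hAbd : ∃ C : ℝ, ∀ n, 1 ≤ n → A n ≤ C * (n : ℝ))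
    (Ghat : ℝ → ℝ)
    (hGhat : ∀ x : ℝ, Ghat x = ⨆ n : ℕ, ∑ i ∈ Finset.Icc 1 n,
      (c n i / A n) * (μ {ω | |X n i ω| > x}).toReal)
    (hGb : Tendsto (fun k : ℕ => (k : ℝ) * G (b k)) atTop (nhds 0))
    (hGhatb : Tendsto (fun k : ℕ => (k : ℝ) * Ghat (b k)) atTop (nhds 0)) :
    ∀ ε : ℝ, 0 < ε → Tendsto (fun n : ℕ =>
      (μ {ω | (1 / b n) * (Finset.range (n + 1)).sup' Finset.nonempty_range_add_one
          (fun j => |∑ i ∈ Finset.Icc 1 j, c n i * X n i ω|) > ε}).toReal)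
      atTop (nhds 0) := by
  obtain ⟨C₀, hC₀⟩ := hbO
  obtain ⟨C, hC⟩ := hAbd
  have hb1 : 0 < b 1 := hbpos 1 le_rfl
  have hΔ : ∀ k, 1 ≤ k → 0 ≤ b (k + 1) - b k :=
    fun k hk => sub_nonneg.mpr (hbmono k (k + 1) hk (by omega))
  -- linear lower bound on b
  have hlin : ∀ n, 1 ≤ n → b 1 ≤ C₀ * (b n / n) := by
    intro n hn
    refine le_trans ?_ (hC₀ n hn)
    have h1 : b 1 / (1:ℝ) ^ 2 ≤ ∑ i ∈ Finset.Icc 1 n, b i / (i:ℝ) ^ 2 := by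
      have := Finset.single_le_sum (f := fun i : ℕ => b i / (i:ℝ) ^ 2)
        (fun i hi => by
          have hi1 := (Finset.mem_Icc.mp hi).1
          have hbi := hbpos i hi1
          positivity)
        (Finset.mem_Icc.mpr ⟨le_rfl, hn⟩)
      simpa using this
    simpa using h1
  have hC₀pos : 0 < C₀ := by
    have h := hlin 1 le_rfl
    norm_num at h
    nlinarith
  have hCpos : 0 < C := by
    have h1 := hC 1 le_rfl
    have h2 := hApos 1 le_rfl
    norm_num at h1
    linarith
  -- probability bounds
  have hp1 : ∀ (n i : ℕ) (x : ℝ), (μ {ω | |X n i ω| > x}).toReal ≤ 1 := by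
    intro n i x
    have h := prob_le_one (μ := μ) (s := {ω | |X n i ω| > x})
    calc (μ {ω | |X n i ω| > x}).toReal ≤ (1 : ENNReal).toReal :=
          ENNReal.toReal_mono ENNReal.one_ne_top h
      _ = 1 := by simp
  -- Ghat is an upper bound, and nonnegative
  have hGhatBdd : ∀ x : ℝ, BddAbove (Set.range (fun n : ℕ =>
      ∑ i ∈ Finset.Icc 1 n, (c n i / A n) * (μ {ω | |X n i ω| > x}).toReal)) := by
    intro x
    refine ⟨1, ?_⟩
    rintro r ⟨m, rfl⟩
    rcases Nat.eq_zero_or_pos m with hm | hm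
    · subst hm; simp
    · calc ∑ i ∈ Finset.Icc 1 m, (c m i / A m) * (μ {ω | |X m i ω| > x}).toReal
          ≤ ∑ i ∈ Finset.Icc 1 m, c m i / A m := by
            refine Finset.sum_le_sum fun i _ => ?_
            exact mul_le_of_le_one_right (div_nonneg (hc m i) (hApos m hm).le) (hp1 m i x)
        _ = 1 := by
            rw [← Finset.sum_div, ← hA m, div_self (hApos m hm).ne']
  have hGhat_ge : ∀ (x : ℝ) (n : ℕ),
      ∑ i ∈ Finset.Icc 1 n, (c n i / A n) * (μ {ω | |X n i ω| > x}).toReal ≤ Ghat x := by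
    intro x n
    rw [hGhat x]
    exact le_ciSup (hGhatBdd x) n
  have hGhat0 : ∀ x : ℝ, 0 ≤ Ghat x := by
    intro x
    have := hGhat_ge x 0
    simpa using this
  -- G is an upper bound
  have hG_ge : ∀ n : ℕ, 1 ≤ n →
      ∑ i ∈ Finset.Icc 1 n, (μ {ω | |X n i ω| > b n}).toReal ≤ (n:ℝ) * G (b n) := by
    intro n hn
    have hBdd : BddAbove (Set.range (fun m : ℕ =>
        (1 / (m:ℝ)) * ∑ i ∈ Finset.Icc 1 m, (μ {ω | |X m i ω| > b n}).toReal)) := by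
      refine ⟨1, ?_⟩
      rintro r ⟨m, rfl⟩
      rcases Nat.eq_zero_or_pos m with hm | hm
      · subst hm; simp
      · have hm' : (0:ℝ) < m := by exact_mod_cast hm
        have hsum : ∑ i ∈ Finset.Icc 1 m, (μ {ω | |X m i ω| > b n}).toReal ≤ (m:ℝ) := by
          calc ∑ i ∈ Finset.Icc 1 m, (μ {ω | |X m i ω| > b n}).toReal
              ≤ ∑ i ∈ Finset.Icc 1 m, (1:ℝ) := Finset.sum_le_sum fun i _ => hp1 m i (b n)
            _ = (m:ℝ) := by simp
        calc (1 / (m:ℝ)) * ∑ i ∈ Finset.Icc 1 m, (μ {ω | |X m i ω| > b n}).toReal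
            ≤ (1 / (m:ℝ)) * (m:ℝ) := by
              exact mul_le_mul_of_nonneg_left hsum (by positivity)
          _ = 1 := by field_simp
    have hle : (1 / (n:ℝ)) * ∑ i ∈ Finset.Icc 1 n, (μ {ω | |X n i ω| > b n}).toReal
        ≤ G (b n) := by
      rw [hG (b n)]
      exact le_ciSup hBdd n
    have hn' : (0:ℝ) < n := by exact_mod_cast hn
    have h2 := mul_le_mul_of_nonneg_left hle hn'.le
    calc ∑ i ∈ Finset.Icc 1 n, (μ {ω | |X n i ω| > b n}).toReal
        = (n:ℝ) * ((1 / (n:ℝ)) * ∑ i ∈ Finset.Icc 1 n, (μ {ω | |X n i ω| > b n}).toReal) := by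
          field_simp
      _ ≤ (n:ℝ) * G (b n) := h2
  -- harmonic sums diverge
  have hharm : Tendsto (fun n : ℕ => ∑ i ∈ Finset.Icc 1 n, 1 / (i:ℝ)) atTop atTop := by
    have e : ∀ n : ℕ, ∑ i ∈ Finset.range n, 1 / ((i:ℝ) + 1)
        = ∑ i ∈ Finset.Icc 1 n, 1 / (i:ℝ) := by
      intro n
      rw [sum_Icc_one_eq (fun i => 1 / (i:ℝ)) n]
      refine Finset.sum_congr rfl fun j _ => ?_
      push_cast
      ring
    exact Real.tendsto_sum_range_one_div_nat_succ_atTop.congr e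
  -- b n / n → ∞ and n / b n → 0
  have hbrat : Tendsto (fun n : ℕ => b n / n) atTop atTop := by
    have hposc : 0 < b 1 / (C₀ * C₀) := by positivity
    refine tendsto_atTop_mono' atTop ?_ (hharm.const_mul_atTop hposc)
    filter_upwards [eventually_ge_atTop 1] with n hn
    have h1 : ∀ i ∈ Finset.Icc 1 n, (b 1 / C₀) * (1 / (i:ℝ)) ≤ b i / (i:ℝ) ^ 2 := by
      intro i hi
      have hi1 := (Finset.mem_Icc.mp hi).1
      have hipos : (0:ℝ) < i := by exact_mod_cast hi1
      have h2 : b 1 / C₀ ≤ b i / i := by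
        rw [div_le_div_iff₀ hC₀pos hipos]
        have := hlin i hi1
        have hbi := hbpos i hi1
        calc b 1 * (i:ℝ) ≤ (C₀ * (b i / i)) * i := by
              exact mul_le_mul_of_nonneg_right this hipos.le
          _ = C₀ * ((b i / ↑i) * ↑i) := by ring
          _ = b i * C₀ := by rw [div_mul_cancel₀ _ hipos.ne']; ring
      calc (b 1 / C₀) * (1 / (i:ℝ)) ≤ (b i / i) * (1 / (i:ℝ)) :=
            mul_le_mul_of_nonneg_right h2 (by positivity)
        _ = b i / (i:ℝ) ^ 2 := by rw [div_mul_div_comm, mul_one, sq]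
    have h3 : (b 1 / C₀) * ∑ i ∈ Finset.Icc 1 n, 1 / (i:ℝ)
        ≤ ∑ i ∈ Finset.Icc 1 n, b i / (i:ℝ) ^ 2 := by
      rw [Finset.mul_sum]
      exact Finset.sum_le_sum h1
    have h5 : (b 1 / C₀) * ∑ i ∈ Finset.Icc 1 n, 1 / (i:ℝ) ≤ C₀ * (b n / n) :=
      le_trans h3 (hC₀ n hn)
    have heq : b 1 / (C₀ * C₀) * ∑ i ∈ Finset.Icc 1 n, 1 / (i:ℝ)
        = ((b 1 / C₀) * ∑ i ∈ Finset.Icc 1 n, 1 / (i:ℝ)) / C₀ := by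
      field_simp
    rw [heq, div_le_iff₀ hC₀pos]
    calc (b 1 / C₀) * ∑ i ∈ Finset.Icc 1 n, 1 / (i:ℝ) ≤ C₀ * (b n / n) := h5
      _ = b n / n * C₀ := by ring
  have hnb : Tendsto (fun n : ℕ => (n:ℝ) / b n) atTop (nhds 0) := by
    have h := hbrat.inv_tendsto_atTop
    refine h.congr' ?_
    filter_upwards [eventually_ge_atTop 1] with n hn
    simp [inv_div]
  -- the Abel-type sum estimate
  have hsumdiv : ∀ n : ℕ, 1 ≤ n →
      ∑ k ∈ Finset.Icc 1 (n - 1), (b (k + 1) - b k) / k ≤ (1 + 2 * C₀) * (b n / n) := by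
    intro n hn
    obtain ⟨m, rfl⟩ : ∃ m, n = m + 1 := ⟨n - 1, (Nat.succ_pred_eq_of_pos hn).symm⟩
    simp only [Nat.add_sub_cancel]
    have h1 := abel15 b hb1 m
    have h2 : ∑ k ∈ Finset.Icc 2 (m + 1), b k / ((k:ℝ) * ((k:ℝ) - 1))
        ≤ ∑ k ∈ Finset.Icc 1 (m + 1), 2 * (b k / (k:ℝ) ^ 2) := by
      calc ∑ k ∈ Finset.Icc 2 (m + 1), b k / ((k:ℝ) * ((k:ℝ) - 1))
          ≤ ∑ k ∈ Finset.Icc 2 (m + 1), 2 * (b k / (k:ℝ) ^ 2) := by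
            refine Finset.sum_le_sum fun k hk => ?_
            obtain ⟨hk2, hkm⟩ := Finset.mem_Icc.mp hk
            have hk2' : (2:ℝ) ≤ k := by exact_mod_cast hk2
            have hbk := hbpos k (by omega)
            have hkk : (k:ℝ) ^ 2 ≤ 2 * ((k:ℝ) * ((k:ℝ) - 1)) := by nlinarith
            rw [div_le_iff₀ (by nlinarith), mul_comm (2:ℝ), mul_assoc, div_mul_eq_mul_div,
              le_div_iff₀ (by nlinarith)]
            exact mul_le_mul_of_nonneg_left hkk hbk.le
        _ ≤ ∑ k ∈ Finset.Icc 1 (m + 1), 2 * (b k / (k:ℝ) ^ 2) := by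
            refine Finset.sum_le_sum_of_subset_of_nonneg
              (Finset.Icc_subset_Icc_left one_le_two) fun i hi _ => ?_
            have hi1 := (Finset.mem_Icc.mp hi).1
            have hbi := hbpos i hi1
            positivity
    have h3 := hC₀ (m + 1) (by omega)
    have h4 : ∑ k ∈ Finset.Icc 1 (m + 1), 2 * (b k / (k:ℝ) ^ 2)
        = 2 * ∑ k ∈ Finset.Icc 1 (m + 1), b k / (k:ℝ) ^ 2 := by
      rw [Finset.mul_sum]
    push_cast at h1 h3 ⊢
    rw [h4] at h2
    linarith
  -- T and its properties
  set T : ℕ → ℝ := fun n => ∑ k ∈ Finset.Icc 1 (n - 1), (b (k + 1) - b k) * Ghat (b k)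
    with hTdef
  have hT0 : ∀ n, 0 ≤ T n := by
    intro n
    refine Finset.sum_nonneg fun k hk => ?_
    exact mul_nonneg (hΔ k (Finset.mem_Icc.mp hk).1) (hGhat0 _)
  -- (n / b n) * T n → 0
  have hTlim : Tendsto (fun n : ℕ => ((n:ℝ) / b n) * T n) atTop (nhds 0) := by
    rw [NormedAddCommGroup.tendsto_nhds_zero]
    intro η hη
    set Cb : ℝ := 1 + 2 * C₀ with hCbdef
    have hCb : 0 < Cb := by rw [hCbdef]; linarith
    have hη2 : 0 < η / (2 * Cb) := by positivity
    have hev := NormedAddCommGroup.tendsto_nhds_zero.mp hGhatb (η / (2 * Cb)) hη2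
    rw [eventually_atTop] at hev
    obtain ⟨K, hK⟩ := hev
    set M := ∑ k ∈ Finset.Icc 1 K, (b (k + 1) - b k) * Ghat (b k) with hM
    have htail : ∀ n : ℕ, K + 2 ≤ n → T n ≤ M + (η / (2 * Cb)) * (Cb * (b n / n)) := by
      intro n hn2
      have hn1 : 1 ≤ n := by omega
      have hIoc : ∀ m : ℕ, Finset.Icc 1 m = Finset.Ioc 0 m := fun m => Finset.Icc_add_one_left_eq_Ioc 0 m
      have hsplit : T n = (∑ k ∈ Finset.Ioc 0 K, (b (k + 1) - b k) * Ghat (b k))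
          + ∑ k ∈ Finset.Ioc K (n - 1), (b (k + 1) - b k) * Ghat (b k) := by
        simp only [hTdef, hIoc]
        rw [Finset.sum_Ioc_consecutive _ (Nat.zero_le K) (by omega : K ≤ n - 1)]
      have htb : ∑ k ∈ Finset.Ioc K (n - 1), (b (k + 1) - b k) * Ghat (b k)
          ≤ (η / (2 * Cb)) * ∑ k ∈ Finset.Icc 1 (n - 1), (b (k + 1) - b k) / k := by
        rw [Finset.mul_sum]
        calc ∑ k ∈ Finset.Ioc K (n - 1), (b (k + 1) - b k) * Ghat (b k)
            ≤ ∑ k ∈ Finset.Ioc K (n - 1), (η / (2 * Cb)) * ((b (k + 1) - b k) / k) := by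
              refine Finset.sum_le_sum fun k hk => ?_
              obtain ⟨hkK, hkn⟩ := Finset.mem_Ioc.mp hk
              have hk1 : 1 ≤ k := by omega
              have hkpos : (0:ℝ) < k := by exact_mod_cast hk1
              have hnorm := hK k (by omega)
              rw [Real.norm_eq_abs,
                abs_of_nonneg (mul_nonneg hkpos.le (hGhat0 _))] at hnorm
              have hg : Ghat (b k) ≤ (η / (2 * Cb)) / k := by
                rw [le_div_iff₀ hkpos]
                nlinarith
              calc (b (k + 1) - b k) * Ghat (b k)
                  ≤ (b (k + 1) - b k) * ((η / (2 * Cb)) / k) :=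
                    mul_le_mul_of_nonneg_left hg (hΔ k hk1)
                _ = (η / (2 * Cb)) * ((b (k + 1) - b k) / k) := by ring
          _ ≤ ∑ k ∈ Finset.Icc 1 (n - 1), (η / (2 * Cb)) * ((b (k + 1) - b k) / k) := by
              refine Finset.sum_le_sum_of_subset_of_nonneg ?_ fun k hk _ => ?_
              · intro x hx
                obtain ⟨hx1, hx2⟩ := Finset.mem_Ioc.mp hx
                exact Finset.mem_Icc.mpr ⟨by omega, hx2⟩
              · have hk1 := (Finset.mem_Icc.mp hk).1
                have hkpos : (0:ℝ) ≤ k := by positivity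
                exact mul_nonneg hη2.le (div_nonneg (hΔ k hk1) hkpos)
      have hfin : (η / (2 * Cb)) * ∑ k ∈ Finset.Icc 1 (n - 1), (b (k + 1) - b k) / k
          ≤ (η / (2 * Cb)) * (Cb * (b n / n)) := by
        refine mul_le_mul_of_nonneg_left ?_ hη2.le
        have := hsumdiv n hn1
        rwa [hCbdef]
      have hM0 : (∑ k ∈ Finset.Ioc 0 K, (b (k + 1) - b k) * Ghat (b k)) = M := by
        rw [hM, hIoc K]
      rw [hsplit, hM0]
      linarith [le_trans htb hfin]
    have hMlim : Tendsto (fun n : ℕ => ((n:ℝ) / b n) * M) atTop (nhds 0) := by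
      simpa using hnb.mul_const M
    have hMev := NormedAddCommGroup.tendsto_nhds_zero.mp hMlim (η / 2) (by positivity)
    filter_upwards [hMev, eventually_ge_atTop (K + 2)] with n h1 h2
    have hn1 : 1 ≤ n := by omega
    have hbn := hbpos n hn1
    have hnpos : (0:ℝ) < n := by exact_mod_cast hn1
    have hq0 : 0 ≤ (n:ℝ) / b n := by positivity
    rw [Real.norm_eq_abs, abs_of_nonneg (mul_nonneg hq0 (hT0 n))]
    have hle := mul_le_mul_of_nonneg_left (htail n h2) hq0
    have hcanc : ((n:ℝ) / b n) * (M + (η / (2 * Cb)) * (Cb * (b n / n)))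
        = ((n:ℝ) / b n) * M + η / 2 := by
      field_simp
    rw [hcanc] at hle
    rw [Real.norm_eq_abs] at h1
    have h1' : ((n:ℝ) / b n) * M < η / 2 := lt_of_le_of_lt (le_abs_self _) h1
    linarith
  -- main estimate
  intro ε hε
  have main : ∀ n : ℕ, 1 ≤ n →
      (μ {ω | (1 / b n) * (Finset.range (n + 1)).sup' Finset.nonempty_range_add_one
          (fun j => |∑ i ∈ Finset.Icc 1 j, c n i * X n i ω|) > ε}).toReal
      ≤ (n:ℝ) * G (b n) + (A n * (b 1 + T n)) / (ε * b n) := by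
    intro n hn
    have hbn : 0 < b n := hbpos n hn
    set g : Ω → ℝ := fun ω => ∑ i ∈ Finset.Icc 1 n, c n i * min |X n i ω| (b n) with hgdef
    have hBmeas : ∀ (i : ℕ) (x : ℝ), MeasurableSet {ω | |X n i ω| > x} :=
      fun i x => measurableSet_lt measurable_const (hXmeas n i).abs
    have hgmeas : Measurable g :=
      Finset.measurable_sum _ fun i _ => ((hXmeas n i).abs.min measurable_const).const_mul (c n i)
    have hg0 : ∀ ω, 0 ≤ g ω := fun ω =>
      Finset.sum_nonneg fun i _ => mul_nonneg (hc n i) (le_min (abs_nonneg _) hbn.le)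
    -- set inclusion
    have hsub : {ω | (1 / b n) * (Finset.range (n + 1)).sup' Finset.nonempty_range_add_one
          (fun j => |∑ i ∈ Finset.Icc 1 j, c n i * X n i ω|) > ε}
        ⊆ (⋃ i ∈ Finset.Icc 1 n, {ω | |X n i ω| > b n}) ∪ {ω | ε * b n ≤ g ω} := by
      intro ω hω
      by_cases hF : ω ∈ ⋃ i ∈ Finset.Icc 1 n, {ω | |X n i ω| > b n}
      · exact Or.inl hF
      · refine Or.inr ?_
        simp only [Set.mem_iUnion, Set.mem_setOf_eq, exists_prop, not_exists, not_and,
          not_lt] at hF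
        have hω1 : ε < (1 / b n) * (Finset.range (n + 1)).sup' Finset.nonempty_range_add_one
            (fun j => |∑ i ∈ Finset.Icc 1 j, c n i * X n i ω|) := hω
        have heq1 : (1 / b n) * (Finset.range (n + 1)).sup' Finset.nonempty_range_add_one
            (fun j => |∑ i ∈ Finset.Icc 1 j, c n i * X n i ω|)
            = ((Finset.range (n + 1)).sup' Finset.nonempty_range_add_one
            (fun j => |∑ i ∈ Finset.Icc 1 j, c n i * X n i ω|)) / b n := by ring
        rw [heq1] at hω1
        have hω2 := (lt_div_iff₀ hbn).mp hω1
        obtain ⟨j, hj, hjgt⟩ := (Finset.lt_sup'_iff _).mp hω2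
        have hjn : j ≤ n := Nat.lt_succ_iff.mp (Finset.mem_range.mp hj)
        have hbound : |∑ i ∈ Finset.Icc 1 j, c n i * X n i ω| ≤ g ω := by
          calc |∑ i ∈ Finset.Icc 1 j, c n i * X n i ω|
              ≤ ∑ i ∈ Finset.Icc 1 j, |c n i * X n i ω| := Finset.abs_sum_le_sum_abs _ _
            _ = ∑ i ∈ Finset.Icc 1 j, c n i * |X n i ω| := by
                refine Finset.sum_congr rfl fun i _ => ?_
                rw [abs_mul, abs_of_nonneg (hc n i)]
            _ ≤ ∑ i ∈ Finset.Icc 1 n, c n i * |X n i ω| :=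
                Finset.sum_le_sum_of_subset_of_nonneg (Finset.Icc_subset_Icc_right hjn)
                  fun i _ _ => mul_nonneg (hc n i) (abs_nonneg _)
            _ = g ω := by
                refine Finset.sum_congr rfl fun i hi => ?_
                rw [min_eq_left (hF i hi)]
        exact le_of_lt (lt_of_lt_of_le hjgt hbound)
    -- Markov
    have hmark : μ {ω | ε * b n ≤ g ω} ≤
        (∫⁻ ω, ENNReal.ofReal (g ω) ∂μ) / ENNReal.ofReal (ε * b n) := by
      have hsub2 : {ω | ε * b n ≤ g ω} ⊆
          {ω | ENNReal.ofReal (ε * b n) ≤ ENNReal.ofReal (g ω)} :=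
        fun ω hω => ENNReal.ofReal_le_ofReal hω
      exact (measure_mono hsub2).trans
        (meas_ge_le_lintegral_div hgmeas.ennreal_ofReal.aemeasurable
          (ENNReal.ofReal_pos.mpr (mul_pos hε hbn)).ne' ENNReal.ofReal_ne_top)
    -- lintegral estimate
    have hlint : ∫⁻ ω, ENNReal.ofReal (g ω) ∂μ
        ≤ ∑ i ∈ Finset.Icc 1 n, ENNReal.ofReal (c n i) *
          (ENNReal.ofReal (b 1) + ∑ k ∈ Finset.Icc 1 (n - 1),
            ENNReal.ofReal (b (k + 1) - b k) * μ {ω | |X n i ω| > b k}) := by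
      have hmeas2 : ∀ i : ℕ, Measurable fun ω => ENNReal.ofReal (min |X n i ω| (b n)) :=
        fun i => ((hXmeas n i).abs.min measurable_const).ennreal_ofReal
      have step1 : ∫⁻ ω, ENNReal.ofReal (g ω) ∂μ
          = ∑ i ∈ Finset.Icc 1 n, ENNReal.ofReal (c n i) *
            ∫⁻ ω, ENNReal.ofReal (min |X n i ω| (b n)) ∂μ := by
        calc ∫⁻ ω, ENNReal.ofReal (g ω) ∂μ
            = ∫⁻ ω, ∑ i ∈ Finset.Icc 1 n, ENNReal.ofReal (c n i) *
                ENNReal.ofReal (min |X n i ω| (b n)) ∂μ := by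
              refine lintegral_congr fun ω => ?_
              rw [hgdef]
              rw [ENNReal.ofReal_sum_of_nonneg
                (fun i _ => mul_nonneg (hc n i) (le_min (abs_nonneg _) hbn.le))]
              exact Finset.sum_congr rfl fun i _ => ENNReal.ofReal_mul (hc n i)
          _ = ∑ i ∈ Finset.Icc 1 n, ∫⁻ ω, ENNReal.ofReal (c n i) *
                ENNReal.ofReal (min |X n i ω| (b n)) ∂μ :=
              lintegral_finset_sum _ fun i _ => (hmeas2 i).const_mul _
          _ = ∑ i ∈ Finset.Icc 1 n, ENNReal.ofReal (c n i) *
                ∫⁻ ω, ENNReal.ofReal (min |X n i ω| (b n)) ∂μ :=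
              Finset.sum_congr rfl fun i _ => lintegral_const_mul _ (hmeas2 i)
      rw [step1]
      refine Finset.sum_le_sum fun i _ => mul_le_mul_right ?_ _
      calc ∫⁻ ω, ENNReal.ofReal (min |X n i ω| (b n)) ∂μ
          ≤ ∫⁻ ω, (ENNReal.ofReal (b 1) + ∑ k ∈ Finset.Icc 1 (n - 1),
              ENNReal.ofReal (b (k + 1) - b k) *
                ({ω | |X n i ω| > b k}).indicator 1 ω) ∂μ := by
            refine lintegral_mono fun ω => ?_
            have hmb := minb15 b hbmono |X n i ω| (n - 1)
            have hnn1 : n - 1 + 1 = n := by omega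
            rw [hnn1] at hmb
            have hnn : ∀ k ∈ Finset.Icc 1 (n - 1),
                0 ≤ (b (k + 1) - b k) * (if b k < |X n i ω| then (1:ℝ) else 0) := by
              intro k hk
              refine mul_nonneg (hΔ k (Finset.mem_Icc.mp hk).1) ?_
              split <;> norm_num
            calc ENNReal.ofReal (min |X n i ω| (b n))
                ≤ ENNReal.ofReal (b 1 + ∑ k ∈ Finset.Icc 1 (n - 1),
                    (b (k + 1) - b k) * (if b k < |X n i ω| then (1:ℝ) else 0)) :=
                  ENNReal.ofReal_le_ofReal hmb
              _ = ENNReal.ofReal (b 1) + ∑ k ∈ Finset.Icc 1 (n - 1),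
                  ENNReal.ofReal ((b (k + 1) - b k) *
                    (if b k < |X n i ω| then (1:ℝ) else 0)) := by
                  rw [ENNReal.ofReal_add hb1.le (Finset.sum_nonneg hnn),
                    ENNReal.ofReal_sum_of_nonneg hnn]
              _ ≤ ENNReal.ofReal (b 1) + ∑ k ∈ Finset.Icc 1 (n - 1),
                  ENNReal.ofReal (b (k + 1) - b k) *
                    ({ω | |X n i ω| > b k}).indicator 1 ω := by
                  refine add_le_add_right (Finset.sum_le_sum fun k hk => ?_) _
                  by_cases hx : b k < |X n i ω| <;>
                    simp [Set.indicator, Set.mem_setOf_eq, hx]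
          _ = ENNReal.ofReal (b 1) + ∑ k ∈ Finset.Icc 1 (n - 1),
              ENNReal.ofReal (b (k + 1) - b k) * μ {ω | |X n i ω| > b k} := by
            rw [lintegral_add_left measurable_const,
              lintegral_finset_sum _
                (fun k _ => (measurable_one.indicator (hBmeas i (b k))).const_mul _),
              lintegral_const, measure_univ, mul_one]
            refine congrArg _ (Finset.sum_congr rfl fun k _ => ?_)
            rw [lintegral_const_mul _ (measurable_one.indicator (hBmeas i (b k))),
              lintegral_indicator_one (hBmeas i (b k))]
    -- combine in ℝ≥0∞
    set D : ENNReal := ∑ i ∈ Finset.Icc 1 n, ENNReal.ofReal (c n i) *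
          (ENNReal.ofReal (b 1) + ∑ k ∈ Finset.Icc 1 (n - 1),
            ENNReal.ofReal (b (k + 1) - b k) * μ {ω | |X n i ω| > b k}) with hD
    have hDne : D ≠ ⊤ := by
      rw [hD]
      rw [ENNReal.sum_ne_top]
      intro i _
      refine ENNReal.mul_ne_top ENNReal.ofReal_ne_top ?_
      rw [ENNReal.add_ne_top]
      refine ⟨ENNReal.ofReal_ne_top, ?_⟩
      rw [ENNReal.sum_ne_top]
      exact fun k _ => ENNReal.mul_ne_top ENNReal.ofReal_ne_top (measure_ne_top μ _)
    have hEN : μ {ω | (1 / b n) * (Finset.range (n + 1)).sup' Finset.nonempty_range_add_one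
          (fun j => |∑ i ∈ Finset.Icc 1 j, c n i * X n i ω|) > ε}
        ≤ ∑ i ∈ Finset.Icc 1 n, μ {ω | |X n i ω| > b n} + D / ENNReal.ofReal (ε * b n) := by
      refine (measure_mono hsub).trans ((measure_union_le _ _).trans ?_)
      exact add_le_add (measure_biUnion_finset_le _ _)
        (hmark.trans (ENNReal.div_le_div_right hlint _))
    have hRne : (∑ i ∈ Finset.Icc 1 n, μ {ω | |X n i ω| > b n}
        + D / ENNReal.ofReal (ε * b n)) ≠ ⊤ := by
      rw [ENNReal.add_ne_top]
      constructor
      · rw [ENNReal.sum_ne_top]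
        exact fun i _ => measure_ne_top μ _
      · exact (ENNReal.div_lt_top hDne (ENNReal.ofReal_pos.mpr (mul_pos hε hbn)).ne').ne
    have htr : (∑ i ∈ Finset.Icc 1 n, μ {ω | |X n i ω| > b n}
          + D / ENNReal.ofReal (ε * b n)).toReal
        = ∑ i ∈ Finset.Icc 1 n, (μ {ω | |X n i ω| > b n}).toReal
          + D.toReal / (ε * b n) := by
      rw [ENNReal.toReal_add (by rw [ENNReal.sum_ne_top]; exact fun i _ => measure_ne_top μ _)
          ((ENNReal.div_lt_top hDne (ENNReal.ofReal_pos.mpr (mul_pos hε hbn)).ne').ne),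
        ENNReal.toReal_sum (fun i _ => measure_ne_top μ _), ENNReal.toReal_div,
        ENNReal.toReal_ofReal (mul_pos hε hbn).le]
    have hDtoReal : D.toReal = ∑ i ∈ Finset.Icc 1 n, c n i *
        (b 1 + ∑ k ∈ Finset.Icc 1 (n - 1),
          (b (k + 1) - b k) * (μ {ω | |X n i ω| > b k}).toReal) := by
      rw [hD, ENNReal.toReal_sum (fun i _ => by
        refine ENNReal.mul_ne_top ENNReal.ofReal_ne_top ?_
        rw [ENNReal.add_ne_top]
        refine ⟨ENNReal.ofReal_ne_top, ?_⟩
        rw [ENNReal.sum_ne_top]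
        exact fun k _ => ENNReal.mul_ne_top ENNReal.ofReal_ne_top (measure_ne_top μ _))]
      refine Finset.sum_congr rfl fun i _ => ?_
      rw [ENNReal.toReal_mul, ENNReal.toReal_ofReal (hc n i),
        ENNReal.toReal_add ENNReal.ofReal_ne_top (by
          rw [ENNReal.sum_ne_top]
          exact fun k _ => ENNReal.mul_ne_top ENNReal.ofReal_ne_top (measure_ne_top μ _)),
        ENNReal.toReal_ofReal hb1.le,
        ENNReal.toReal_sum (fun k _ =>
          ENNReal.mul_ne_top ENNReal.ofReal_ne_top (measure_ne_top μ _))]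
      congr 2
      refine Finset.sum_congr rfl fun k hk => ?_
      rw [ENNReal.toReal_mul, ENNReal.toReal_ofReal (hΔ k (Finset.mem_Icc.mp hk).1)]
    have hDle : D.toReal ≤ A n * (b 1 + T n) := by
      rw [hDtoReal]
      have key : ∀ k : ℕ,
          ∑ i ∈ Finset.Icc 1 n, c n i * (μ {ω | |X n i ω| > b k}).toReal
            ≤ A n * Ghat (b k) := by
        intro k
        have h1 : ∑ i ∈ Finset.Icc 1 n, c n i * (μ {ω | |X n i ω| > b k}).toReal
            = A n * ∑ i ∈ Finset.Icc 1 n, (c n i / A n) * (μ {ω | |X n i ω| > b k}).toReal := by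
          rw [Finset.mul_sum]
          refine Finset.sum_congr rfl fun i _ => ?_
          have hAc : A n * (c n i / A n) = c n i := by
            field_simp [(hApos n hn).ne']
          rw [← mul_assoc, hAc]
        rw [h1]
        exact mul_le_mul_of_nonneg_left (hGhat_ge (b k) n) (hApos n hn).le
      calc ∑ i ∈ Finset.Icc 1 n, c n i * (b 1 + ∑ k ∈ Finset.Icc 1 (n - 1),
            (b (k + 1) - b k) * (μ {ω | |X n i ω| > b k}).toReal)
          = (∑ i ∈ Finset.Icc 1 n, c n i) * b 1
            + ∑ k ∈ Finset.Icc 1 (n - 1), (b (k + 1) - b k) *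
              ∑ i ∈ Finset.Icc 1 n, c n i * (μ {ω | |X n i ω| > b k}).toReal := by
            simp only [mul_add, Finset.sum_add_distrib]
            congr 1
            · rw [Finset.sum_mul]
            · simp only [Finset.mul_sum]
              rw [Finset.sum_comm]
              refine Finset.sum_congr rfl fun k _ => ?_
              refine Finset.sum_congr rfl fun i _ => by ring
          _ ≤ A n * b 1 + ∑ k ∈ Finset.Icc 1 (n - 1), (b (k + 1) - b k) *
              (A n * Ghat (b k)) := by
            refine add_le_add (le_of_eq (by rw [hA n])) ?_
            refine Finset.sum_le_sum fun k hk => ?_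
            exact mul_le_mul_of_nonneg_left (key k) (hΔ k (Finset.mem_Icc.mp hk).1)
          _ = A n * (b 1 + T n) := by
            rw [hTdef, mul_add]
            congr 1
            rw [Finset.mul_sum]
            exact Finset.sum_congr rfl fun k _ => by ring
    calc (μ {ω | (1 / b n) * (Finset.range (n + 1)).sup' Finset.nonempty_range_add_one
          (fun j => |∑ i ∈ Finset.Icc 1 j, c n i * X n i ω|) > ε}).toReal
        ≤ (∑ i ∈ Finset.Icc 1 n, μ {ω | |X n i ω| > b n}
          + D / ENNReal.ofReal (ε * b n)).toReal := ENNReal.toReal_mono hRne hEN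
      _ = ∑ i ∈ Finset.Icc 1 n, (μ {ω | |X n i ω| > b n}).toReal
          + D.toReal / (ε * b n) := htr
      _ ≤ (n:ℝ) * G (b n) + (A n * (b 1 + T n)) / (ε * b n) := by
        refine add_le_add (hG_ge n hn) ?_
        exact (div_le_div_iff_of_pos_right (mul_pos hε hbn)).mpr hDle
  -- squeeze
  have hbound2 : Tendsto (fun n : ℕ => (n:ℝ) * G (b n)
      + (1 / ε) * (C * (b 1 * ((n:ℝ) / b n)) + C * (((n:ℝ) / b n) * T n))) atTop (nhds 0) := by
    have h1 : Tendsto (fun n : ℕ => b 1 * ((n:ℝ) / b n)) atTop (nhds 0) := by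
      simpa using hnb.const_mul (b 1)
    have h2 := ((h1.const_mul C).add (hTlim.const_mul C)).const_mul (1 / ε)
    simpa using hGb.add h2
  refine squeeze_zero' ?_ ?_ hbound2
  · filter_upwards with n
    exact ENNReal.toReal_nonneg
  · filter_upwards [eventually_ge_atTop 1] with n hn
    refine (main n hn).trans ?_
    have hbn := hbpos n hn
    have hnpos : (0:ℝ) < n := by exact_mod_cast hn
    have hbT : 0 ≤ b 1 + T n := by linarith [hT0 n]
    have h1 : A n * (b 1 + T n) ≤ C * (n:ℝ) * (b 1 + T n) :=
      mul_le_mul_of_nonneg_right (hC n hn) hbT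
    have h2 : (A n * (b 1 + T n)) / (ε * b n) ≤ (C * (n:ℝ) * (b 1 + T n)) / (ε * b n) :=
      (div_le_div_iff_of_pos_right (mul_pos hε hbn)).mpr h1
    have h3 : (C * (n:ℝ) * (b 1 + T n)) / (ε * b n)
        = (1 / ε) * (C * (b 1 * ((n:ℝ) / b n)) + C * (((n:ℝ) / b n) * T n)) := by
      field_simp
    rw [h3] at h2
    linarith
end
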